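/- arXiv:2605.25089 — 7 statements merged into one kernel-verified Lean document; each statement's English description precedes it below -/
import Mathlib

section
/- Let Q₁, Q₂ be commuting orthogonal projections and X a Hermitian operator with νI ⪯ X ⪯ μI for 0 < ν ≤ μ. Then Q₁XQ₂ + Q₂XQ₁ ⪰ 2ν Q₁Q₂ − (μ−ν)(Q₁ + Q₂) ⪰ −(μ−ν)(Q₁+Q₂). -/
open Matrix
open scoped ComplexOrder

lemma smul_psd_aux {m : Type*} [Fintype m] {P : Matrix m m ℂ} (hP : P.PosSemidef)
    (c : ℝ) (hc : 0 ≤ c) : ((c : ℂ) • P).PosSemidef := by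
  constructor
  · show _ = _
    rw [conjTranspose_smul, hP.1.eq]
    congr 1
    simp [Complex.star_def, Complex.conj_ofReal]
  · intro x
    have h := mul_nonneg (show (0 : ℂ) ≤ (c : ℂ) by exact_mod_cast hc) (hP.2 x)
    simp only [Finsupp.mul_sum] at h
    simp only [Matrix.smul_apply, smul_eq_mul]
    simp_rw [show ∀ a b d : ℂ, a * ((c : ℂ) * b) * d = (c : ℂ) * (a * b * d) by
      intros; ring]
    exact h

/-- For commuting orthogonal projections `Q₁, Q₂` and Hermitian `X` with
`νI ⪯ X ⪯ μI`, `0 < ν ≤ μ`, one has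
`Q₁XQ₂ + Q₂XQ₁ ⪰ 2ν Q₁Q₂ − (μ−ν)(Q₁+Q₂) ⪰ −(μ−ν)(Q₁+Q₂)`. -/
theorem stmt6 {n : ℕ} (ν μ : ℝ) (hν : 0 < ν) (hνμ : ν ≤ μ)
    (Q₁ Q₂ X : Matrix (Fin n) (Fin n) ℂ)
    (h1 : Q₁.IsHermitian) (h1p : Q₁ * Q₁ = Q₁)
    (h2 : Q₂.IsHermitian) (h2p : Q₂ * Q₂ = Q₂)
    (hcomm : Q₁ * Q₂ = Q₂ * Q₁)
    (hX : X.IsHermitian)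
    (hlo : (X - (ν : ℂ) • 1).PosSemidef) (hhi : ((μ : ℂ) • 1 - X).PosSemidef) :
    (Q₁ * X * Q₂ + Q₂ * X * Q₁
        - (((2 * ν : ℝ) : ℂ) • (Q₁ * Q₂) - ((μ - ν : ℝ) : ℂ) • (Q₁ + Q₂))).PosSemidef
    ∧ ((((2 * ν : ℝ) : ℂ) • (Q₁ * Q₂) - ((μ - ν : ℝ) : ℂ) • (Q₁ + Q₂))
        - (-(((μ - ν : ℝ) : ℂ) • (Q₁ + Q₂)))).PosSemidef := by
  constructor
  · have key : Q₁ * X * Q₂ + Q₂ * X * Q₁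
        - (((2 * ν : ℝ) : ℂ) • (Q₁ * Q₂) - ((μ - ν : ℝ) : ℂ) • (Q₁ + Q₂))
        = (Q₁ + Q₂)ᴴ * (X - (ν : ℂ) • 1) * (Q₁ + Q₂)
          + (Q₁ᴴ * ((μ : ℂ) • 1 - X) * Q₁ + Q₂ᴴ * ((μ : ℂ) • 1 - X) * Q₂) := by
      rw [conjTranspose_add, h1.eq, h2.eq]
      simp only [Complex.ofReal_sub, Complex.ofReal_mul, Complex.ofReal_ofNat,
        mul_sub, sub_mul, mul_add, add_mul, smul_mul_assoc, mul_smul_comm,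
        mul_one, one_mul, h1p, h2p, smul_add, sub_smul, smul_smul, two_smul]
      rw [hcomm]
      module
    rw [key]
    exact ((hlo.conjTranspose_mul_mul_same _).add
      ((hhi.conjTranspose_mul_mul_same _).add (hhi.conjTranspose_mul_mul_same _)))
  · have key : (((2 * ν : ℝ) : ℂ) • (Q₁ * Q₂) - ((μ - ν : ℝ) : ℂ) • (Q₁ + Q₂))
        - (-(((μ - ν : ℝ) : ℂ) • (Q₁ + Q₂))) = ((2 * ν : ℝ) : ℂ) • (Q₁ * Q₂) := by
      abel
    rw [key]
    refine smul_psd_aux ?_ _ (by linarith)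
    have : Q₁ * Q₂ = (Q₁ * Q₂)ᴴ * (Q₁ * Q₂) := by
      symm
      calc (Q₁ * Q₂)ᴴ * (Q₁ * Q₂) = Q₂ * Q₁ * (Q₁ * Q₂) := by
            rw [conjTranspose_mul, h1.eq, h2.eq]
        _ = Q₂ * (Q₁ * Q₁) * Q₂ := by noncomm_ring
        _ = Q₁ * Q₂ := by rw [h1p, ← hcomm, mul_assoc, h2p]
    rw [this]
    exact posSemidef_conjTranspose_mul_self _
end

section
/- Let h₁, …, h_m be positive semi-definite operators on a finite-dimensional Hilbert space, and suppose there exist constants a > 0 and b ≥ 0 such that (i) h_e² ⪰ a·h_e for each e, (ii) for every pair e₁ ≠ e₂ either h_{e₁}h_{e₂} + h_{e₂}h_{e₁} ⪰ 0 or h_{e₁}h_{e₂} + h_{e₂}h_{e₁} ⪰ −b(h_{e₁} + h_{e₂}), where for each e the number of e' with the latter (non-commuting) relation is at most z. If b·z < a, then H = Σ_e h_e satisfies H² ⪰ (a − bz)·H; in particular the smallest nonzero eigenvalue of H is at least a − bz. -/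
open Matrix
open scoped ComplexOrder

private lemma psd_sum {ι : Type*} {n : ℕ} (s : Finset ι) (f : ι → Matrix (Fin n) (Fin n) ℂ)
    (hf : ∀ i ∈ s, (f i).PosSemidef) : (∑ i ∈ s, f i).PosSemidef :=
  Finset.sum_induction f _ (fun _ _ h1 h2 => h1.add h2) Matrix.PosSemidef.zero hf

private lemma psd_smul {n : ℕ} {c : ℝ} (hc : 0 ≤ c) {M : Matrix (Fin n) (Fin n) ℂ}
    (hM : M.PosSemidef) : ((c : ℂ) • M).PosSemidef := by
  refine .of_dotProduct_mulVec_nonneg ?_ (fun x => ?_)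
  · rw [Matrix.IsHermitian, conjTranspose_smul, hM.1]
    congr 1
    simp [Complex.star_def, Complex.conj_ofReal]
  · rw [smul_mulVec, dotProduct_smul, smul_eq_mul]
    exact mul_nonneg (Complex.zero_le_real.mpr hc) (hM.dotProduct_mulVec_nonneg x)

/-- Martingale-method gap bound: if each `h e` is PSD with `h e² ⪰ a·h e`, every pair of
distinct terms either has a nonnegative anticommutator or satisfies
`h e₁ h e₂ + h e₂ h e₁ ⪰ −b(h e₁ + h e₂)` (with at most `z` such "bad" partners per `e₁`),
and `b·z < a`, then `H = Σ h e` satisfies `H² ⪰ (a − bz)·H`, and hence every nonzero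
eigenvalue of `H` is at least `a − bz`. -/
theorem stmt7 {n m : ℕ} (a b : ℝ) (ha : 0 < a) (hb : 0 ≤ b) (z : ℕ)
    (h : Fin m → Matrix (Fin n) (Fin n) ℂ)
    (hpsd : ∀ e, (h e).PosSemidef)
    (hsq : ∀ e, (h e * h e - (a : ℂ) • h e).PosSemidef)
    (bad : Fin m → Finset (Fin m))
    (hcard : ∀ e, (bad e).card ≤ z)
    (hgood : ∀ e₁ e₂, e₁ ≠ e₂ → e₂ ∉ bad e₁ → (h e₁ * h e₂ + h e₂ * h e₁).PosSemidef)
    (hbadrel : ∀ e₁ e₂, e₁ ≠ e₂ → e₂ ∈ bad e₁ →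
        (h e₁ * h e₂ + h e₂ * h e₁ - (-((b : ℂ) • (h e₁ + h e₂)))).PosSemidef)
    (hbz : b * z < a) :
    ((∑ e, h e) * (∑ e, h e) - ((a - b * z : ℝ) : ℂ) • (∑ e, h e)).PosSemidef
    ∧ ∀ μ : ℝ, (μ : ℂ) ∈ spectrum ℂ (∑ e, h e) → μ ≠ 0 → a - b * z ≤ μ := by
  classical
  set H : Matrix (Fin n) (Fin n) ℂ := ∑ e, h e with hHdef
  set D : Finset (Fin m × Fin m) := (Finset.univ : Finset (Fin m)).offDiag with hD
  set Dlt : Finset (Fin m × Fin m) := D.filter (fun p => p.1 < p.2) with hDlt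
  set P : Fin m × Fin m → Prop := fun p => p.2 ∈ bad p.1 ∧ p.1 ∈ bad p.2 with hP
  set badP : Finset (Fin m × Fin m) := Dlt.filter P with hbadP
  set goodP : Finset (Fin m × Fin m) := Dlt.filter (fun p => ¬ P p) with hgoodP
  have hDlt_ne : ∀ p ∈ Dlt, p.1 ≠ p.2 := by
    intro p hp
    exact ne_of_lt (Finset.mem_filter.mp hp).2
  -- counting
  set cnt : Fin m → ℕ := fun e => (badP.filter (fun p => p.1 = e ∨ p.2 = e)).card with hcnt
  have hcnt_le : ∀ e, cnt e ≤ z := by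
    intro e
    refine le_trans ?_ (hcard e)
    apply Finset.card_le_card_of_injOn (fun p => if p.1 = e then p.2 else p.1)
    · intro p hp
      obtain ⟨hpb, hor⟩ := Finset.mem_filter.mp hp
      obtain ⟨hplt, hPp⟩ := Finset.mem_filter.mp hpb
      by_cases h1 : p.1 = e
      · simp only [if_pos h1]
        exact h1 ▸ hPp.1
      · have h2 : p.2 = e := hor.resolve_left h1
        simp only [if_neg h1]
        exact h2 ▸ hPp.2
    · intro p hp q hq hpq
      obtain ⟨hpb, hpor⟩ := Finset.mem_filter.mp hp
      obtain ⟨hqb, hqor⟩ := Finset.mem_filter.mp hq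
      have hplt := (Finset.mem_filter.mp hpb).1
      have hqlt := (Finset.mem_filter.mp hqb).1
      have hplt' : p.1 < p.2 := (Finset.mem_filter.mp hplt).2
      have hqlt' : q.1 < q.2 := (Finset.mem_filter.mp hqlt).2
      by_cases h1 : p.1 = e <;> by_cases h2 : q.1 = e
      · simp [h1, h2] at hpq
        exact Prod.ext (h1.trans h2.symm) hpq
      · have h2' : q.2 = e := hqor.resolve_left h2
        simp [h1, h2] at hpq
        exfalso
        rw [h1] at hplt'; rw [h2'] at hqlt'; rw [hpq] at hplt'
        exact lt_asymm hplt' hqlt'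
      · have h1' : p.2 = e := hpor.resolve_left h1
        simp [h1, h2] at hpq
        exfalso
        rw [h1'] at hplt'; rw [h2] at hqlt'; rw [hpq] at hplt'
        exact lt_asymm hplt' hqlt'
      · have h1' : p.2 = e := hpor.resolve_left h1
        have h2' : q.2 = e := hqor.resolve_left h2
        simp [h1, h2] at hpq
        exact Prod.ext hpq (h1'.trans h2'.symm)
  -- step 1 : H * H expansion
  have e1 : H * H = (∑ e, h e * h e) + ∑ p ∈ D, h p.1 * h p.2 := by
    rw [hHdef, Finset.sum_mul_sum, ← Finset.sum_product' (f := fun i j => h i * h j),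
      ← Finset.diag_union_offDiag,
      Finset.sum_union (Finset.disjoint_diag_offDiag _), Finset.sum_diag]
  -- step 2 : symmetrize over unordered pairs
  have e2 : ∑ p ∈ D, h p.1 * h p.2 = ∑ p ∈ Dlt, (h p.1 * h p.2 + h p.2 * h p.1) := by
    rw [← Finset.sum_filter_add_sum_filter_not D (fun p => p.1 < p.2)
      (fun p => h p.1 * h p.2), Finset.sum_add_distrib]
    congr 1
    apply Finset.sum_nbij' (fun p : Fin m × Fin m => p.swap)
      (fun p : Fin m × Fin m => p.swap)
    · intro p hp
      obtain ⟨hpD, hnlt⟩ := Finset.mem_filter.mp hp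
      have hne : p.1 ≠ p.2 := (Finset.mem_offDiag.mp hpD).2.2
      refine Finset.mem_filter.mpr ⟨Finset.mem_offDiag.mpr ⟨Finset.mem_univ _,
        Finset.mem_univ _, ?_⟩, ?_⟩
      · exact hne.symm
      · exact lt_of_le_of_ne (not_lt.mp hnlt) hne.symm
    · intro p hp
      obtain ⟨hpD, hlt⟩ := Finset.mem_filter.mp hp
      refine Finset.mem_filter.mpr ⟨Finset.mem_offDiag.mpr ⟨Finset.mem_univ _,
        Finset.mem_univ _, (Finset.mem_offDiag.mp hpD).2.2.symm⟩, not_lt.mpr hlt.le⟩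
    · intro p _; rfl
    · intro p _; rfl
    · intro p _; rfl
  -- step 3 : split into good and bad pairs
  have e3 : ∑ p ∈ Dlt, (h p.1 * h p.2 + h p.2 * h p.1)
      = (∑ p ∈ goodP, (h p.1 * h p.2 + h p.2 * h p.1))
        + ∑ p ∈ badP, (h p.1 * h p.2 + h p.2 * h p.1) := by
    rw [hgoodP, hbadP, add_comm]
    exact (Finset.sum_filter_add_sum_filter_not Dlt P _).symm
  -- step 5 : fiberwise counting identity
  have e5 : ∑ p ∈ badP, ((b : ℂ) • h p.1 + (b : ℂ) • h p.2)
      = ∑ e, cnt e • ((b : ℂ) • h e) := by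
    have inner : ∀ p ∈ badP, (b : ℂ) • h p.1 + (b : ℂ) • h p.2
        = ∑ e, (if p.1 = e ∨ p.2 = e then (b : ℂ) • h e else 0) := by
      intro p hp
      have hne : p.1 ≠ p.2 := hDlt_ne p (Finset.mem_filter.mp hp).1
      rw [← Finset.sum_filter]
      have : (Finset.univ.filter (fun e => p.1 = e ∨ p.2 = e)) = {p.1, p.2} := by
        ext e
        simp [eq_comm, Finset.mem_insert]
      rw [this, Finset.sum_pair hne]
    rw [Finset.sum_congr rfl inner, Finset.sum_comm]
    refine Finset.sum_congr rfl (fun e _ => ?_)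
    rw [← Finset.sum_filter, Finset.sum_const]
  -- the remainder term coefficients are nonnegative
  have hcoef : ∀ e, 0 ≤ b * ((z : ℝ) - (cnt e : ℝ)) := by
    intro e
    apply mul_nonneg hb
    rw [sub_nonneg]
    exact_mod_cast hcnt_le e
  -- the key algebraic identity
  have key : H * H - ((a - b * z : ℝ) : ℂ) • H
      = (∑ e, (h e * h e - (a : ℂ) • h e))
        + ((∑ p ∈ goodP, (h p.1 * h p.2 + h p.2 * h p.1))
          + ((∑ p ∈ badP, (h p.1 * h p.2 + h p.2 * h p.1
                + ((b : ℂ) • h p.1 + (b : ℂ) • h p.2)))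
            + ∑ e, ((b * ((z : ℝ) - (cnt e : ℝ)) : ℝ) : ℂ) • h e)) := by
    have hsplit : ((a - b * z : ℝ) : ℂ) • H = (a : ℂ) • H - ((b * z : ℝ) : ℂ) • H := by
      rw [← sub_smul]
      congr 1
      push_cast
      ring
    have hsum1 : ∑ e, (h e * h e - (a : ℂ) • h e)
        = (∑ e, h e * h e) - (a : ℂ) • H := by
      rw [Finset.sum_sub_distrib, hHdef, Finset.smul_sum]
    have hsum2 : ∑ p ∈ badP, (h p.1 * h p.2 + h p.2 * h p.1
          + ((b : ℂ) • h p.1 + (b : ℂ) • h p.2))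
        = (∑ p ∈ badP, (h p.1 * h p.2 + h p.2 * h p.1))
          + ∑ p ∈ badP, ((b : ℂ) • h p.1 + (b : ℂ) • h p.2) :=
      Finset.sum_add_distrib
    have hsum3 : ((b * z : ℝ) : ℂ) • H
        = (∑ e, cnt e • ((b : ℂ) • h e))
          + ∑ e, ((b * ((z : ℝ) - (cnt e : ℝ)) : ℝ) : ℂ) • h e := by
      rw [hHdef, Finset.smul_sum, ← Finset.sum_add_distrib]
      refine Finset.sum_congr rfl (fun e _ => ?_)
      rw [← Nat.cast_smul_eq_nsmul ℂ, smul_smul, ← add_smul]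
      congr 1
      push_cast
      ring
    rw [hsplit, e1, e2, e3, hsum1, hsum2, hsum3, ← e5]
    abel
  have hXpsd : (H * H - ((a - b * z : ℝ) : ℂ) • H).PosSemidef := by
    rw [key]
    refine Matrix.PosSemidef.add (psd_sum _ _ (fun e _ => hsq e))
      (Matrix.PosSemidef.add ?_ (Matrix.PosSemidef.add ?_ ?_))
    · apply psd_sum
      intro p hp
      obtain ⟨hplt, hnP⟩ := Finset.mem_filter.mp hp
      have hne : p.1 ≠ p.2 := hDlt_ne p hplt
      have hnP' : ¬ (p.2 ∈ bad p.1 ∧ p.1 ∈ bad p.2) := hnP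
      by_cases h1 : p.2 ∈ bad p.1
      · have h2 : p.1 ∉ bad p.2 := fun hc => hnP' ⟨h1, hc⟩
        have := hgood p.2 p.1 hne.symm h2
        rwa [add_comm] at this
      · exact hgood p.1 p.2 hne h1
    · apply psd_sum
      intro p hp
      obtain ⟨hplt, hPp⟩ := Finset.mem_filter.mp hp
      have hne : p.1 ≠ p.2 := hDlt_ne p hplt
      have := hbadrel p.1 p.2 hne hPp.1
      rwa [sub_neg_eq_add, smul_add] at this
    · exact psd_sum _ _ (fun e _ => psd_smul (hcoef e) (hpsd e))
  refine ⟨hXpsd, ?_⟩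
  -- eigenvalue bound
  intro μ hμ hμ0
  have hHpsd : H.PosSemidef := psd_sum _ _ (fun e _ => hpsd e)
  have hnu : ¬ IsUnit (algebraMap ℂ (Matrix (Fin n) (Fin n) ℂ) μ - H) :=
    spectrum.mem_iff.mp hμ
  have hdet : (algebraMap ℂ (Matrix (Fin n) (Fin n) ℂ) μ - H).det = 0 := by
    by_contra hd
    exact hnu ((Matrix.isUnit_iff_isUnit_det _).mpr (isUnit_iff_ne_zero.mpr hd))
  obtain ⟨v, hv0, hv⟩ := Matrix.exists_mulVec_eq_zero_iff.mpr hdet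
  have hv' : H *ᵥ v = (μ : ℂ) • v := by
    rw [sub_mulVec, sub_eq_zero] at hv
    rw [← hv, Algebra.algebraMap_eq_smul_one, smul_mulVec, one_mulVec]
  have hs : 0 < star v ⬝ᵥ v := Matrix.dotProduct_star_self_pos_iff.mpr hv0
  have q1 : star v ⬝ᵥ H *ᵥ v = (μ : ℂ) * (star v ⬝ᵥ v) := by
    rw [hv', dotProduct_smul, smul_eq_mul]
  have q2 : star v ⬝ᵥ (H * H) *ᵥ v = (μ : ℂ) ^ 2 * (star v ⬝ᵥ v) := by
    rw [← mulVec_mulVec, hv', mulVec_smul, hv', smul_smul, dotProduct_smul, smul_eq_mul]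
    ring
  have q3 : (0 : ℂ) ≤ star v ⬝ᵥ (H * H - ((a - b * z : ℝ) : ℂ) • H) *ᵥ v := hXpsd.dotProduct_mulVec_nonneg v
  rw [sub_mulVec, dotProduct_sub, q2, smul_mulVec, dotProduct_smul, smul_eq_mul, q1] at q3
  have hμpos : 0 < μ := by
    rcases lt_trichotomy μ 0 with hneg | hzero | hposi
    · exfalso
      have hq := hHpsd.dotProduct_mulVec_nonneg v
      rw [q1] at hq
      have hμC : (μ : ℂ) < 0 := by
        rw [show (0 : ℂ) = ((0 : ℝ) : ℂ) by norm_num]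
        exact Complex.real_lt_real.mpr hneg
      exact absurd hq (mul_neg_of_neg_of_pos hμC hs).not_ge
    · exact absurd hzero hμ0
    · exact hposi
  by_contra hlt
  push_neg at hlt
  have hneg : (μ : ℂ) ^ 2 * (star v ⬝ᵥ v) - ((a - b * z : ℝ) : ℂ) * ((μ : ℂ) * (star v ⬝ᵥ v))
      < 0 := by
    have heq : (μ : ℂ) ^ 2 * (star v ⬝ᵥ v) - ((a - b * z : ℝ) : ℂ) * ((μ : ℂ) * (star v ⬝ᵥ v))
        = ((μ * (μ - (a - b * z)) : ℝ) : ℂ) * (star v ⬝ᵥ v) := by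
      push_cast
      ring
    rw [heq]
    apply mul_neg_of_neg_of_pos _ hs
    have hr : μ * (μ - (a - b * z)) < 0 :=
      mul_neg_of_pos_of_neg hμpos (by linarith)
    rw [show (0 : ℂ) = ((0 : ℝ) : ℂ) by norm_num]
    exact Complex.real_lt_real.mpr hr
  exact absurd q3 hneg.not_ge
end

section
/- Let ℰ be a quantum channel (completely positive trace-preserving map) on a finite-dimensional Hilbert space whose unique fixed point among states is a pure state |ψ⟩⟨ψ|. Then the only eigenvalue of ℰ on the unit circle is 1, with eigenvector |ψ⟩⟨ψ|; i.e., every other eigenvalue λ of ℰ satisfies |λ| < 1. -/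
open Matrix
open scoped ComplexOrder

namespace Stmt9Aux

variable {n k : ℕ}

abbrev Mat (n : ℕ) := Matrix (Fin n) (Fin n) ℂ

lemma dot_conj (a b : Fin n → ℂ) : star a ⬝ᵥ b = starRingEnd ℂ (star b ⬝ᵥ a) := by
  simp [dotProduct, map_sum, mul_comm]

lemma ext_of_mulVec {A B : Mat n} (h : ∀ x, A *ᵥ x = B *ᵥ x) : A = B := by
  ext i j
  have := congrFun (h (Pi.single j 1)) i
  simpa [mulVec_single] using this

lemma vecMulVec_mulVec (u v x : Fin n → ℂ) :
    vecMulVec u v *ᵥ x = (v ⬝ᵥ x) • u := by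
  ext i
  simp [vecMulVec_apply, mulVec, dotProduct, Finset.mul_sum, mul_comm, mul_assoc, mul_left_comm]

lemma conj_vecMulVec (K : Mat n) (u : Fin n → ℂ) :
    K * vecMulVec u (star u) * Kᴴ = vecMulVec (K *ᵥ u) (star (K *ᵥ u)) := by
  ext i j
  simp only [mul_apply, vecMulVec_apply, conjTranspose_apply, mulVec, dotProduct,
    Pi.star_apply, star_sum, star_mul']
  rw [Finset.mul_sum]
  refine Finset.sum_congr rfl fun b _ => ?_
  rw [Finset.sum_mul, Finset.sum_mul]
  exact Finset.sum_congr rfl fun a _ => by ring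

lemma psd_vecMulVec (u : Fin n → ℂ) : (vecMulVec u (star u)).PosSemidef := by
  rw [posSemidef_iff_dotProduct_mulVec]
  constructor
  · ext i j
    simp [conjTranspose_apply, vecMulVec_apply, mul_comm]
  · intro x
    rw [vecMulVec_mulVec, dotProduct_smul]
    have h1 : star x ⬝ᵥ u = starRingEnd ℂ (star u ⬝ᵥ x) := dot_conj x u
    rw [h1, smul_eq_mul, mul_comm]
    exact star_mul_self_nonneg _

lemma trace_vecMulVec_star (u : Fin n → ℂ) :
    (vecMulVec u (star u)).trace = star u ⬝ᵥ u := by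
  simp [Matrix.trace, Matrix.diag, vecMulVec_apply, dotProduct, mul_comm]

lemma quad_sandwich (B W : Mat n) (x : Fin n → ℂ) :
    star x ⬝ᵥ ((Bᴴ * W * B) *ᵥ x) = star (B *ᵥ x) ⬝ᵥ (W *ᵥ (B *ᵥ x)) := by
  rw [← mulVec_mulVec, ← mulVec_mulVec, dotProduct_mulVec (star x), star_mulVec]

end Stmt9Aux

namespace Stmt9Aux
open Matrix
variable {n k : ℕ}

lemma posSemidef_iff_eq_transpose_mul_self {A : Mat n} : A.PosSemidef ↔ ∃ B : Mat n, A = Bᴴ * B :=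
  ⟨fun hA => by
    open scoped MatrixOrder in
    exact CStarAlgebra.nonneg_iff_eq_star_mul_self.mp hA.nonneg,
   fun ⟨B, hB⟩ => hB ▸ posSemidef_conjTranspose_mul_self B⟩

lemma psd_diag_nonneg {M : Mat n} (h : M.PosSemidef) (i : Fin n) : 0 ≤ M i i := by
  have := h.dotProduct_mulVec_nonneg (Pi.single i 1)
  simpa [mulVec_single, dotProduct, Pi.single_apply, mul_comm] using this

lemma psd_trace_nonneg {M : Mat n} (h : M.PosSemidef) : 0 ≤ M.trace :=
  Finset.sum_nonneg fun i _ => psd_diag_nonneg h i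

lemma psd_trace_zero {M : Mat n} (h : M.PosSemidef) (ht : M.trace = 0) : M = 0 := by
  obtain ⟨B, rfl⟩ := posSemidef_iff_eq_transpose_mul_self.mp h
  rw [conjTranspose_mul_self_eq_zero]
  have hcol : ∀ i : Fin n, (Bᴴ * B) i i = star (fun r => B r i) ⬝ᵥ (fun r => B r i) := by
    intro i; simp [mul_apply, dotProduct, conjTranspose_apply]
  have hnn : ∀ i : Fin n, 0 ≤ (Bᴴ * B) i i := psd_diag_nonneg h
  have hz : ∀ i ∈ Finset.univ, (Bᴴ * B) i i = 0 :=
    (Finset.sum_eq_zero_iff_of_nonneg (fun i _ => hnn i)).mp ht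
  ext r i
  have := hz i (Finset.mem_univ i)
  rw [hcol i, dotProduct_star_self_eq_zero] at this
  exact congrFun this r

lemma trace_split {A : Mat n} (Q : Mat n) (hQ : Q * Q = Q) :
    (Q*A*Q).trace + ((1-Q)*A*(1-Q)).trace = A.trace := by
  have e3 : (1-Q)*(1-Q) = 1 - Q := by
    rw [Matrix.sub_mul, Matrix.mul_sub, Matrix.mul_sub, hQ]
    simp
  rw [Matrix.mul_assoc, Matrix.mul_assoc, Matrix.trace_mul_comm Q,
    Matrix.trace_mul_comm (1-Q), Matrix.mul_assoc, Matrix.mul_assoc, hQ, e3]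
  rw [Matrix.mul_sub, Matrix.mul_one, Matrix.trace_sub]
  ring

lemma psd_conj_eq_self {A Q : Mat n} (hA : A.PosSemidef) (hQ2 : Q*Q = Q) (hQh : Qᴴ = Q)
    (htr : A.trace ≤ (Q*A*Q).trace) : Q*A*Q = A := by
  set R := 1 - Q with hR
  have hRh : Rᴴ = R := by rw [hR, conjTranspose_sub, conjTranspose_one, hQh]
  have hRpsd : (R*A*R).PosSemidef := by
    have := hA.mul_mul_conjTranspose_same R
    rwa [hRh] at this
  have hts : (Q*A*Q).trace + (R*A*R).trace = A.trace := trace_split Q hQ2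
  have htz : (R*A*R).trace = 0 := by
    have h1 : (R*A*R).trace ≤ 0 := by
      have := hts
      -- (R*A*R).trace = A.trace - (Q*A*Q).trace ≤ 0
      have : (R*A*R).trace = A.trace - (Q*A*Q).trace := by linear_combination hts
      rw [this]; exact sub_nonpos.mpr htr
    exact le_antisymm h1 (psd_trace_nonneg hRpsd)
  have hRAR : R*A*R = 0 := psd_trace_zero hRpsd htz
  obtain ⟨C, hC⟩ := posSemidef_iff_eq_transpose_mul_self.mp hA
  have hCR : C * R = 0 := by
    have : (C*R)ᴴ * (C*R) = 0 := by
      rw [conjTranspose_mul, hRh]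
      calc R * Cᴴ * (C * R) = R * (Cᴴ * C) * R := by noncomm_ring
        _ = R * A * R := by rw [← hC]
        _ = 0 := hRAR
    exact conjTranspose_mul_self_eq_zero.mp this
  have hAR : A * R = 0 := by
    rw [hC, Matrix.mul_assoc, hCR, Matrix.mul_zero]
  have hAQ : A * Q = A := by
    have : A * (1 - Q) = 0 := hAR
    rw [Matrix.mul_sub, Matrix.mul_one, sub_eq_zero] at this
    exact this.symm
  have hQA : Q * A = A := by
    have := congrArg conjTranspose hAQ
    rwa [conjTranspose_mul, hQh, hA.1.eq] at this
  rw [Matrix.mul_assoc, hAQ, hQA]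

end Stmt9Aux

namespace Stmt9Aux
open Matrix
variable {n k : ℕ}

lemma herm_parts {H P : Mat n} (hH : H.IsHermitian) (hP2 : P*P = P) (hPh : Pᴴ = P)
    (hHP : H * P = H) :
    ∃ Hp Hm Q : Mat n, Hp.PosSemidef ∧ Hm.PosSemidef ∧ H = Hp - Hm ∧
      Q*Q = Q ∧ Qᴴ = Q ∧ Q*H*Q = Hp ∧ Q*Hm*Q = 0 ∧ Hp*P = Hp := by
  classical
  set U : Mat n := (hH.eigenvectorUnitary : Mat n) with hU
  have hU2 : U * Uᴴ = 1 := by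
    have := Matrix.mem_unitaryGroup_iff.mp (hH.eigenvectorUnitary).2
    simpa [hU, Matrix.star_eq_conjTranspose] using this
  have hU1 : Uᴴ * U = 1 := by
    have := Matrix.mem_unitaryGroup_iff'.mp (hH.eigenvectorUnitary).2
    simpa [hU, Matrix.star_eq_conjTranspose] using this
  set d : Fin n → ℝ := hH.eigenvalues with hd
  -- sandwich helper
  let W : (Fin n → ℝ) → Mat n := fun f => U * diagonal (fun i => (f i : ℂ)) * Uᴴ
  have hmulW : ∀ f g, W f * W g = W (fun i => f i * g i) := by
    intro f g
    show U * diagonal _ * Uᴴ * (U * diagonal _ * Uᴴ) = U * diagonal _ * Uᴴ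
    calc U * diagonal (fun i => (f i : ℂ)) * Uᴴ * (U * diagonal (fun i => (g i : ℂ)) * Uᴴ)
        = U * diagonal (fun i => (f i : ℂ)) * (Uᴴ * U) * diagonal (fun i => (g i : ℂ)) * Uᴴ := by
          noncomm_ring
      _ = U * (diagonal (fun i => (f i : ℂ)) * diagonal (fun i => (g i : ℂ))) * Uᴴ := by
          rw [hU1]; noncomm_ring
      _ = U * diagonal (fun i => ((f i * g i : ℝ) : ℂ)) * Uᴴ := by
          rw [diagonal_mul_diagonal]; push_cast; rfl
  have hWherm : ∀ f, (W f)ᴴ = W f := by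
    intro f
    show (U * diagonal _ * Uᴴ)ᴴ = _
    rw [conjTranspose_mul, conjTranspose_mul, conjTranspose_conjTranspose,
      diagonal_conjTranspose]
    have : star (fun i => (f i : ℂ)) = fun i => (f i : ℂ) := by
      funext i; simp
    rw [this, ← Matrix.mul_assoc]
  have hWpsd : ∀ f, (∀ i, 0 ≤ f i) → (W f).PosSemidef := by
    intro f hf
    have : (diagonal (fun i => (f i : ℂ))).PosSemidef := by
      refine posSemidef_diagonal_iff.mpr fun i => ?_
      exact_mod_cast hf i
    exact this.mul_mul_conjTranspose_same U
  have hWsub : ∀ f g, W f - W g = W (fun i => f i - g i) := by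
    intro f g
    show U * diagonal _ * Uᴴ - U * diagonal _ * Uᴴ = U * diagonal _ * Uᴴ
    have : (diagonal (fun i => ((f i : ℝ) : ℂ)) - diagonal (fun i => (g i : ℂ)))
        = diagonal (fun i => ((f i - g i : ℝ) : ℂ)) := by
      rw [diagonal_sub]; push_cast; rfl
    rw [← this]; noncomm_ring
  have hspec : H = W d := by
    have := hH.spectral_theorem
    simpa [hU, Matrix.star_eq_conjTranspose, Function.comp_def, Unitary.conjStarAlgAut_apply] using this
  set dp : Fin n → ℝ := fun i => max (d i) 0 with hdp
  set dm : Fin n → ℝ := fun i => max (-d i) 0 with hdm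
  set e : Fin n → ℝ := fun i => if 0 < d i then 1 else 0 with he
  refine ⟨W dp, W dm, W e, hWpsd dp (fun i => le_max_right _ _),
    hWpsd dm (fun i => le_max_right _ _), ?_, ?_, hWherm e, ?_, ?_, ?_⟩
  · rw [hWsub, hspec]
    have hfun : (fun i => dp i - dm i) = d := by
      funext i
      rcases le_total (d i) 0 with h | h
      · simp [hdp, hdm, max_eq_right h, max_eq_left (neg_nonneg.mpr h)]
      · simp [hdp, hdm, max_eq_left h, max_eq_right (neg_nonpos.mpr h)]
    rw [hfun]
  · rw [hmulW]
    have hfun : (fun i => e i * e i) = e := by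
      funext i; by_cases h : 0 < d i <;> simp [he, h]
    rw [hfun]
  · rw [hspec, hmulW, hmulW]
    have hfun : (fun i => e i * d i * e i) = dp := by
      funext i
      by_cases h : 0 < d i
      · simp [he, h, hdp, max_eq_left h.le]
      · simp [he, h, hdp, max_eq_right (le_of_not_gt h)]
    rw [hfun]
  · rw [hmulW, hmulW]
    have : (fun i => e i * dm i * e i) = fun _ => (0:ℝ) := by
      funext i
      by_cases h : 0 < d i
      · simp [he, h, hdm, max_eq_right (neg_nonpos.mpr h.le)]
      · simp [he, h]
    rw [this]
    show U * diagonal _ * Uᴴ = 0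
    have : diagonal (fun _ : Fin n => ((0:ℝ):ℂ)) = 0 := by simp
    rw [this, Matrix.mul_zero, Matrix.zero_mul]
  · -- (W dp) * P = W dp, from H * P = H
    have hHM : H * (1 - P) = 0 := by rw [Matrix.mul_sub, Matrix.mul_one, hHP, sub_self]
    have hDd : diagonal (fun i => (d i : ℂ)) * (Uᴴ * (1 - P)) = 0 := by
      have h1 : U * (diagonal (fun i => (d i : ℂ)) * (Uᴴ * (1 - P))) = 0 := by
        calc U * (diagonal (fun i => (d i : ℂ)) * (Uᴴ * (1 - P)))
            = (U * diagonal (fun i => (d i : ℂ)) * Uᴴ) * (1 - P) := by noncomm_ring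
          _ = H * (1 - P) := by rw [hspec]
          _ = 0 := hHM
      have := congrArg (fun M => Uᴴ * M) h1
      simpa [← Matrix.mul_assoc, hU1] using this
    have hDdp : diagonal (fun i => (dp i : ℂ)) * (Uᴴ * (1 - P)) = 0 := by
      ext i j
      have hentry := congrFun (congrFun hDd i) j
      rw [diagonal_mul] at hentry ⊢
      by_cases h : d i = 0
      · simp [hdp, h]
      · have : (Uᴴ * (1 - P)) i j = 0 := by
          have hne : ((d i : ℂ)) ≠ 0 := by exact_mod_cast h
          exact (mul_eq_zero.mp hentry).resolve_left hne
        simp [this]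
    have : W dp * (1 - P) = 0 := by
      calc W dp * (1 - P) = U * (diagonal (fun i => (dp i : ℂ)) * (Uᴴ * (1 - P))) := by
            show U * diagonal _ * Uᴴ * (1 - P) = _; noncomm_ring
        _ = 0 := by rw [hDdp, Matrix.mul_zero]
    rw [Matrix.mul_sub, Matrix.mul_one, sub_eq_zero] at this
    exact this.symm

end Stmt9Aux

namespace Stmt9Aux
open Matrix
variable {n k : ℕ}

lemma sum_mulVec' (M : Fin k → Mat n) (x : Fin n → ℂ) :
    (∑ α, M α) *ᵥ x = ∑ α, M α *ᵥ x := by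
  ext i
  simp only [mulVec, dotProduct, Matrix.sum_apply, Finset.sum_apply, Finset.sum_mul]
  rw [Finset.sum_comm]

lemma psd_sum {M : Fin k → Mat n} (h : ∀ α, (M α).PosSemidef) :
    (∑ α, M α).PosSemidef := by
  rw [posSemidef_iff_dotProduct_mulVec]
  constructor
  · show (∑ α, M α)ᴴ = _
    rw [conjTranspose_sum]
    exact Finset.sum_congr rfl fun α _ => (h α).1
  · intro x
    rw [sum_mulVec']
    have : star x ⬝ᵥ ∑ α, M α *ᵥ x = ∑ α, star x ⬝ᵥ (M α *ᵥ x) := by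
      simp only [dotProduct, Finset.sum_apply, Finset.mul_sum, Pi.star_apply]
      rw [Finset.sum_comm]
    rw [this]
    exact Finset.sum_nonneg fun α _ => (h α).dotProduct_mulVec_nonneg x

lemma fix_pos_parts {L : Fin k → Mat n} {P : Mat n}
    (hP2 : P*P = P) (hPh : Pᴴ = P)
    (hsum : ∑ α, (L α)ᴴ * L α = P)
    (hL1 : ∀ α, P * L α = L α)
    {H : Mat n} (hH : H.IsHermitian) (hfixH : ∑ α, L α * H * (L α)ᴴ = H) :
    ∃ A B : Mat n, A.PosSemidef ∧ B.PosSemidef ∧ H = A - B ∧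
      (∑ α, L α * A * (L α)ᴴ) = A ∧ (∑ α, L α * B * (L α)ᴴ) = B := by
  have hLP : ∀ α, (L α)ᴴ * P = (L α)ᴴ := fun α => by
    rw [← hPh, ← conjTranspose_mul, hL1]
  have hsupp : H * P = H := by
    conv_lhs => rw [← hfixH]
    rw [Finset.sum_mul]
    conv_rhs => rw [← hfixH]
    refine Finset.sum_congr rfl fun α _ => ?_
    rw [Matrix.mul_assoc (L α * H), hLP]
  obtain ⟨Hp, Hm, Q, hHp, hHm, hHdec, hQ2, hQh, hQHQ, hQHmQ, hHpP⟩ :=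
    herm_parts hH hP2 hPh hsupp
  -- trace preservation for P-supported matrices
  have htr : ∀ W : Mat n, W * P = W → (∑ α, L α * W * (L α)ᴴ).trace = W.trace := by
    intro W hW
    rw [Matrix.trace_sum]
    have h1 : ∀ α, (L α * W * (L α)ᴴ).trace = ((L α)ᴴ * L α * W).trace := by
      intro α
      rw [Matrix.trace_mul_cycle]
    calc ∑ α, (L α * W * (L α)ᴴ).trace = ∑ α, ((L α)ᴴ * L α * W).trace :=
          Finset.sum_congr rfl fun α _ => h1 α
      _ = ((∑ α, (L α)ᴴ * L α) * W).trace := by rw [Finset.sum_mul, Matrix.trace_sum]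
      _ = (P * W).trace := by rw [hsum]
      _ = (W * P).trace := Matrix.trace_mul_comm P W
      _ = W.trace := by rw [hW]
  set A : Mat n := ∑ α, L α * Hp * (L α)ᴴ with hA
  set B : Mat n := ∑ α, L α * Hm * (L α)ᴴ with hB
  have hApsd : A.PosSemidef := psd_sum fun α => hHp.mul_mul_conjTranspose_same (L α)
  have hBpsd : B.PosSemidef := psd_sum fun α => hHm.mul_mul_conjTranspose_same (L α)
  have hAB : A - B = H := by
    rw [hA, hB, ← Finset.sum_sub_distrib]
    conv_rhs => rw [← hfixH]
    refine Finset.sum_congr rfl fun α _ => ?_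
    rw [hHdec]
    rw [Matrix.mul_sub, Matrix.sub_mul]
  have htrA : A.trace = Hp.trace := htr Hp hHpP
  -- Q*A*Q - Q*B*Q = Hp
  have hQABQ : Q*A*Q - Q*B*Q = Hp := by
    have : Q*A*Q - Q*B*Q = Q*(A-B)*Q := by noncomm_ring
    rw [this, hAB, hQHQ]
  have hSpsd : (Q*B*Q).PosSemidef := by
    have := hBpsd.mul_mul_conjTranspose_same Q
    rwa [hQh] at this
  -- trace of Q*A*Q ≤ trace A
  have hQAQ_le : (Q*A*Q).trace ≤ A.trace := by
    have hsplit := trace_split (A := A) Q hQ2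
    have hpos : 0 ≤ ((1-Q)*A*(1-Q)).trace := by
      have h1h : (1-Q)ᴴ = 1-Q := by rw [conjTranspose_sub, conjTranspose_one, hQh]
      have := hApsd.mul_mul_conjTranspose_same (1-Q)
      rw [h1h] at this
      exact psd_trace_nonneg this
    calc (Q*A*Q).trace ≤ (Q*A*Q).trace + ((1-Q)*A*(1-Q)).trace := le_add_of_nonneg_right hpos
      _ = A.trace := hsplit
  have hStr : (Q*B*Q).trace = 0 := by
    have he : (Q*B*Q).trace = (Q*A*Q).trace - Hp.trace := by
      have := congrArg Matrix.trace hQABQ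
      rw [Matrix.trace_sub] at this
      linear_combination -this
    have h1 : (Q*B*Q).trace ≤ 0 := by
      rw [he, ← htrA]
      exact sub_nonpos.mpr hQAQ_le
    exact le_antisymm h1 (psd_trace_nonneg hSpsd)
  have hQBQ : Q*B*Q = 0 := psd_trace_zero hSpsd hStr
  have hQAQ : Q*A*Q = Hp := by rw [← hQABQ, hQBQ, sub_zero]
  have hAeq : A = Hp := by
    have : A.trace ≤ (Q*A*Q).trace := by rw [hQAQ, ← htrA]
    rw [← psd_conj_eq_self hApsd hQ2 hQh this, hQAQ]
  have hBeq : B = Hm := by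
    have : B = A - H := by rw [← hAB]; abel
    rw [this, hAeq, hHdec]
    abel
  exact ⟨Hp, Hm, hHp, hHm, hHdec, by rw [← hA, hAeq], by rw [← hB, hBeq]⟩

end Stmt9Aux

namespace Stmt9Aux
open Matrix
variable {n k : ℕ}

lemma trace_key (A B C : Mat n) : (C * A * Cᴴ * B).trace = (A * (Cᴴ * B * C)).trace := by
  have e1 : C * A * Cᴴ * B = C * (A * (Cᴴ * B)) := by noncomm_ring
  have e2 : (A * (Cᴴ * B)) * C = A * (Cᴴ * B * C) := by noncomm_ring
  rw [e1, Matrix.trace_mul_comm, e2]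

/-- `X ↦ ∑ α, L α * X * (L α)ᴴ - c • X` as a linear map. -/
noncomputable def sandMap (L : Fin k → Mat n) (c : ℂ) : Mat n →ₗ[ℂ] Mat n where
  toFun X := (∑ α, L α * X * (L α)ᴴ) - c • X
  map_add' X Y := by
    simp only [Matrix.mul_add, Matrix.add_mul, Finset.sum_add_distrib, smul_add]
    abel
  map_smul' c' X := by
    simp only [RingHom.id_apply, Matrix.mul_smul, Matrix.smul_mul, ← Finset.smul_sum,
      smul_sub, smul_comm c' c]

/-- `Y ↦ ∑ α, (L α)ᴴ * Y * L α - c • Y` as a linear map. -/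
noncomputable def sandAdjMap (L : Fin k → Mat n) (c : ℂ) : Mat n →ₗ[ℂ] Mat n where
  toFun Y := (∑ α, (L α)ᴴ * Y * L α) - c • Y
  map_add' X Y := by
    simp only [Matrix.mul_add, Matrix.add_mul, Finset.sum_add_distrib, smul_add]
    abel
  map_smul' c' X := by
    simp only [RingHom.id_apply, Matrix.mul_smul, Matrix.smul_mul, ← Finset.smul_sum,
      smul_sub, smul_comm c' c]

lemma adj_pair (L : Fin k → Mat n) (c : ℂ) (A B : Mat n) :
    ((sandMap L c A)ᴴ * B).trace = (Aᴴ * (sandAdjMap L (starRingEnd ℂ c) B)).trace := by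
  show (((∑ α, L α * A * (L α)ᴴ) - c • A)ᴴ * B).trace
      = (Aᴴ * ((∑ α, (L α)ᴴ * B * L α) - starRingEnd ℂ c • B)).trace
  rw [conjTranspose_sub, conjTranspose_sum, Matrix.sub_mul, Matrix.mul_sub,
    Matrix.trace_sub, Matrix.trace_sub]
  congr 1
  · rw [Finset.sum_mul, Matrix.trace_sum, Matrix.mul_sum, Matrix.trace_sum]
    refine Finset.sum_congr rfl fun α _ => ?_
    have : (L α * A * (L α)ᴴ)ᴴ = L α * Aᴴ * (L α)ᴴ := by
      simp only [conjTranspose_mul, conjTranspose_conjTranspose]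
      noncomm_ring
    rw [this, trace_key]
  · rw [conjTranspose_smul, Matrix.smul_mul, Matrix.mul_smul, trace_smul, trace_smul]
    rfl

lemma adj_pair' (L : Fin k → Mat n) (c : ℂ) (A B : Mat n) :
    ((sandAdjMap L c A)ᴴ * B).trace = (Aᴴ * (sandMap L (starRingEnd ℂ c) B)).trace := by
  show (((∑ α, (L α)ᴴ * A * L α) - c • A)ᴴ * B).trace
      = (Aᴴ * ((∑ α, L α * B * (L α)ᴴ) - starRingEnd ℂ c • B)).trace
  rw [conjTranspose_sub, conjTranspose_sum, Matrix.sub_mul, Matrix.mul_sub,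
    Matrix.trace_sub, Matrix.trace_sub]
  congr 1
  · rw [Finset.sum_mul, Matrix.trace_sum, Matrix.mul_sum, Matrix.trace_sum]
    refine Finset.sum_congr rfl fun α _ => ?_
    have : ((L α)ᴴ * A * L α)ᴴ = (L α)ᴴ * Aᴴ * ((L α)ᴴ)ᴴ := by
      simp only [conjTranspose_mul, conjTranspose_conjTranspose]
      noncomm_ring
    rw [this, trace_key Aᴴ B ((L α)ᴴ), conjTranspose_conjTranspose]
  · rw [conjTranspose_smul, Matrix.smul_mul, Matrix.mul_smul, trace_smul, trace_smul]
    rfl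

lemma adjoint_kernel {f g : Mat n →ₗ[ℂ] Mat n}
    (hadj : ∀ A B : Mat n, ((f A)ᴴ * B).trace = (Aᴴ * (g B)).trace)
    {X : Mat n} (hX : X ≠ 0) (hfX : f X = 0) : ∃ Y : Mat n, Y ≠ 0 ∧ g Y = 0 := by
  by_contra hcon
  push_neg at hcon
  have hginj : Function.Injective g := by
    rw [← LinearMap.ker_eq_bot, LinearMap.ker_eq_bot']
    intro m hm
    by_contra hne
    exact hcon m hne hm
  have hgsurj := LinearMap.injective_iff_surjective.mp hginj
  obtain ⟨W, hW⟩ := hgsurj X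
  have htr : (Xᴴ * X).trace = 0 := by
    have : (Xᴴ * X).trace = (Xᴴ * g W).trace := by rw [hW]
    rw [this, ← hadj X W, hfX]
    simp
  exact hX (conjTranspose_mul_self_eq_zero.mp
    (psd_trace_zero (posSemidef_conjTranspose_mul_self X) htr))

end Stmt9Aux

namespace Stmt9Aux
open Matrix Complex
variable {n k : ℕ}

lemma smul_fix {L : Fin k → Mat n} {W : Mat n} (c : ℂ)
    (h : (∑ α, L α * W * (L α)ᴴ) = W) :
    (∑ α, L α * (c • W) * (L α)ᴴ) = c • W := by
  calc (∑ α, L α * (c • W) * (L α)ᴴ) = c • ∑ α, L α * W * (L α)ᴴ := by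
        rw [Finset.smul_sum]
        exact Finset.sum_congr rfl fun α _ => by
          rw [Matrix.mul_smul, Matrix.smul_mul]
    _ = c • W := by rw [h]

lemma exists_fixed_state {L : Fin k → Mat n} {P : Mat n}
    (hP2 : P*P = P) (hPh : Pᴴ = P) (hPne : P ≠ (0 : Mat n))
    (hsum : ∑ α, (L α)ᴴ * L α = P)
    (hL1 : ∀ α, P * L α = L α) :
    ∃ ρ : Mat n, ρ.PosSemidef ∧ ρ.trace = 1 ∧ P * ρ * P = ρ ∧
      (∑ α, L α * ρ * (L α)ᴴ) = ρ := by
  have hLP : ∀ α, (L α)ᴴ * P = (L α)ᴴ := fun α => by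
    rw [← hPh, ← conjTranspose_mul, hL1]
  -- the adjoint map fixes P, so the map itself has a nonzero fixed point
  have hfP : sandAdjMap L 1 P = 0 := by
    show (∑ α, (L α)ᴴ * P * L α) - (1:ℂ) • P = 0
    rw [one_smul, sub_eq_zero]
    calc ∑ α, (L α)ᴴ * P * L α = ∑ α, (L α)ᴴ * L α :=
          Finset.sum_congr rfl fun α _ => by rw [hLP]
      _ = P := hsum
  have hadj : ∀ A B : Mat n, ((sandAdjMap L 1 A)ᴴ * B).trace
      = (Aᴴ * (sandMap L 1 B)).trace := by
    intro A B
    have := adj_pair' L 1 A B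
    simpa using this
  obtain ⟨X, hXne, hXfix0⟩ := adjoint_kernel hadj hPne hfP
  have hXfix : (∑ α, L α * X * (L α)ᴴ) = X := by
    have : (∑ α, L α * X * (L α)ᴴ) - (1:ℂ) • X = 0 := hXfix0
    rw [one_smul, sub_eq_zero] at this
    exact this
  -- conjugate transpose is also fixed
  have hXHfix : (∑ α, L α * Xᴴ * (L α)ᴴ) = Xᴴ := by
    have := congrArg conjTranspose hXfix
    rw [conjTranspose_sum] at this
    calc (∑ α, L α * Xᴴ * (L α)ᴴ) = ∑ α, (L α * X * (L α)ᴴ)ᴴ := by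
          refine Finset.sum_congr rfl fun α _ => ?_
          simp only [conjTranspose_mul, conjTranspose_conjTranspose]
          noncomm_ring
      _ = Xᴴ := this
  -- a nonzero Hermitian fixed point
  have hcomb : ∃ H : Mat n, H.IsHermitian ∧ H ≠ 0 ∧ (∑ α, L α * H * (L α)ᴴ) = H := by
    by_cases h1 : X + Xᴴ = 0
    · refine ⟨Complex.I • (Xᴴ - X), ?_, ?_, ?_⟩
      · show (Complex.I • (Xᴴ - X))ᴴ = _
        rw [conjTranspose_smul, conjTranspose_sub, conjTranspose_conjTranspose]
        rw [show star Complex.I = -Complex.I by simp [Complex.star_def, Complex.conj_I]]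
        rw [neg_smul, ← smul_neg, neg_sub]
      · intro h2
        apply hXne
        have h3 : Xᴴ - X = 0 := by
          have := congrArg (fun M => (-Complex.I) • M) h2
          simpa [smul_smul] using this
        have h4 : Xᴴ = X := by rwa [sub_eq_zero] at h3
        rw [h4] at h1
        have : (2:ℂ) • X = 0 := by
          rw [two_smul]; exact h1
        have h5 := congrArg (fun M => ((2:ℂ)⁻¹) • M) this
        simpa [smul_smul] using h5
      · apply smul_fix
        rw [show (∑ α, L α * (Xᴴ - X) * (L α)ᴴ)
            = (∑ α, L α * Xᴴ * (L α)ᴴ) - (∑ α, L α * X * (L α)ᴴ) by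
          rw [← Finset.sum_sub_distrib]
          exact Finset.sum_congr rfl fun α _ => by rw [Matrix.mul_sub, Matrix.sub_mul]]
        rw [hXfix, hXHfix]
    · refine ⟨X + Xᴴ, ?_, h1, ?_⟩
      · show (X + Xᴴ)ᴴ = _
        rw [conjTranspose_add, conjTranspose_conjTranspose, add_comm]
      · rw [show (∑ α, L α * (X + Xᴴ) * (L α)ᴴ)
            = (∑ α, L α * X * (L α)ᴴ) + (∑ α, L α * Xᴴ * (L α)ᴴ) by
          rw [← Finset.sum_add_distrib]
          exact Finset.sum_congr rfl fun α _ => by rw [Matrix.mul_add, Matrix.add_mul]]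
        rw [hXfix, hXHfix]
  obtain ⟨H, hHherm, hHne, hHfix⟩ := hcomb
  obtain ⟨A, B, hApsd, hBpsd, hHdec, hAfix, hBfix⟩ :=
    fix_pos_parts hP2 hPh hsum hL1 hHherm hHfix
  -- one of A, B is nonzero
  have hWex : ∃ W : Mat n, W.PosSemidef ∧ W ≠ 0 ∧ (∑ α, L α * W * (L α)ᴴ) = W := by
    by_cases hA0 : A = 0
    · refine ⟨B, hBpsd, ?_, hBfix⟩
      intro hB0
      exact hHne (by rw [hHdec, hA0, hB0, sub_zero])
    · exact ⟨A, hApsd, hA0, hAfix⟩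
  obtain ⟨W, hWpsd, hWne, hWfix⟩ := hWex
  set t : ℂ := W.trace with ht
  have ht0 : 0 ≤ t := psd_trace_nonneg hWpsd
  have htne : t ≠ 0 := fun h => hWne (psd_trace_zero hWpsd h)
  have htim : t.im = 0 := by
    have := Complex.le_def.mp ht0
    simpa using this.2.symm
  have htre : 0 ≤ t.re := by
    have := Complex.le_def.mp ht0
    simpa using this.1
  have htval : ((t.re : ℝ) : ℂ) = t := by
    apply Complex.ext <;> simp [htim]
  set ρ : Mat n := t⁻¹ • W with hρ
  have hρfix : (∑ α, L α * ρ * (L α)ᴴ) = ρ := smul_fix _ hWfix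
  have hρpsd : ρ.PosSemidef := by
    rw [posSemidef_iff_dotProduct_mulVec]
    constructor
    · show ρᴴ = ρ
      rw [hρ, conjTranspose_smul, hWpsd.1.eq]
      congr 1
      rw [← htval, ← Complex.ofReal_inv]
      simp
    · intro x
      rw [hρ, smul_mulVec, dotProduct_smul]
      have h1 : 0 ≤ star x ⬝ᵥ W *ᵥ x := hWpsd.dotProduct_mulVec_nonneg x
      have h2 : 0 ≤ t⁻¹ := by
        rw [← htval, ← Complex.ofReal_inv]
        rw [Complex.zero_le_real]
        positivity
      exact mul_nonneg h2 h1
  have hρtr : ρ.trace = 1 := by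
    rw [hρ, trace_smul, smul_eq_mul, ← ht, inv_mul_cancel₀ htne]
  refine ⟨ρ, hρpsd, hρtr, ?_, hρfix⟩
  -- P-support
  have : P * (∑ α, L α * ρ * (L α)ᴴ) * P = ∑ α, L α * ρ * (L α)ᴴ := by
    rw [Finset.mul_sum, Finset.sum_mul]
    refine Finset.sum_congr rfl fun α _ => ?_
    calc P * (L α * ρ * (L α)ᴴ) * P = (P * L α) * ρ * ((L α)ᴴ * P) := by noncomm_ring
      _ = L α * ρ * (L α)ᴴ := by rw [hL1, hLP]
  rw [hρfix] at this
  exact this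

end Stmt9Aux

namespace Stmt9Aux
open Matrix Complex
variable {n k : ℕ}

lemma dot_sum (M : Fin k → Mat n) (x : Fin n → ℂ) :
    star x ⬝ᵥ (∑ α, M α) *ᵥ x = ∑ α, star x ⬝ᵥ (M α *ᵥ x) := by
  rw [sum_mulVec']
  simp only [dotProduct, Finset.sum_apply, Finset.mul_sum, Pi.star_apply]
  rw [Finset.sum_comm]

lemma psd_smul_real {M : Mat n} (h : M.PosSemidef) {r : ℝ} (hr : 0 ≤ r) :
    (((r:ℂ)) • M).PosSemidef := by
  rw [posSemidef_iff_dotProduct_mulVec]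
  constructor
  · show ((r:ℂ) • M)ᴴ = _
    rw [conjTranspose_smul, h.1.eq]
    congr 1
    simp
  · intro x
    rw [smul_mulVec, dotProduct_smul]
    exact mul_nonneg (by rw [Complex.zero_le_real]; exact hr) (h.dotProduct_mulVec_nonneg x)

lemma smul_vec_cancel {ψ : Fin n → ℂ} (hψ : ψ ≠ 0) {a b : ℂ}
    (h : a • ψ = b • ψ) : a = b := by
  obtain ⟨j, hj⟩ := Function.ne_iff.mp hψ
  have := congrFun h j
  simp only [Pi.smul_apply, smul_eq_mul] at this
  exact mul_right_cancel₀ (by simpa using hj) this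

lemma top_proj {T : Mat n} (hpsd : T.PosSemidef) (hTne : T ≠ (0 : Mat n)) :
    ∃ (P : Mat n) (cm : ℝ), 0 < cm ∧ P*P = P ∧ Pᴴ = P ∧ P ≠ (0 : Mat n) ∧
      (∀ x, ((cm:ℂ) • (1:Mat n) - T) *ᵥ x = 0 ↔ P *ᵥ x = x) ∧
      ((cm:ℂ) • (1:Mat n) - T).PosSemidef := by
  classical
  have hne : Nonempty (Fin n) := by
    rcases Nat.eq_zero_or_pos n with h | h
    · subst h; exact absurd (by ext i j; exact i.elim0 : T = 0) hTne
    · exact Fin.pos_iff_nonempty.mp h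
  have hH : T.IsHermitian := hpsd.1
  set U : Mat n := (hH.eigenvectorUnitary : Mat n) with hU
  have hU2 : U * Uᴴ = 1 := by
    have := Matrix.mem_unitaryGroup_iff.mp (hH.eigenvectorUnitary).2
    simpa [hU, Matrix.star_eq_conjTranspose] using this
  have hU1 : Uᴴ * U = 1 := by
    have := Matrix.mem_unitaryGroup_iff'.mp (hH.eigenvectorUnitary).2
    simpa [hU, Matrix.star_eq_conjTranspose] using this
  have hUU : ∀ w : Fin n → ℂ, Uᴴ *ᵥ (U *ᵥ w) = w := fun w => by
    rw [mulVec_mulVec, hU1, one_mulVec]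
  have hUUT : ∀ w : Fin n → ℂ, U *ᵥ (Uᴴ *ᵥ w) = w := fun w => by
    rw [mulVec_mulVec, hU2, one_mulVec]
  set d : Fin n → ℝ := hH.eigenvalues with hd
  have hspec : T = U * diagonal (fun i => (d i : ℂ)) * Uᴴ := by
    have := hH.spectral_theorem
    simpa [hU, Matrix.star_eq_conjTranspose, Function.comp_def, Unitary.conjStarAlgAut_apply] using this
  obtain ⟨i₀, _, hmax⟩ := Finset.exists_max_image Finset.univ d Finset.univ_nonempty
  set cm : ℝ := d i₀ with hcm
  have hd0 : ∀ i, 0 ≤ d i := fun i => hpsd.eigenvalues_nonneg i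
  have hcm0 : 0 ≤ cm := hd0 i₀
  have hcmpos : 0 < cm := by
    rcases lt_or_eq_of_le hcm0 with h | h
    · exact h
    · exfalso
      apply hTne
      have hz : ∀ i, d i = 0 := fun i => le_antisymm (by rw [h]; exact hmax i (Finset.mem_univ i)) (hd0 i)
      rw [hspec]
      have : (diagonal (fun i => ((d i : ℝ) : ℂ))) = 0 := by
        ext i j
        by_cases hij : i = j <;> simp [diagonal_apply, hij, hz]
      rw [this, Matrix.mul_zero, Matrix.zero_mul]
  set E : Mat n := diagonal (fun i => if d i = cm then (1:ℂ) else 0) with hE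
  set P : Mat n := U * E * Uᴴ with hP
  have hEE : E * E = E := by
    rw [hE, diagonal_mul_diagonal]
    have hfun : (fun i => (if d i = cm then (1:ℂ) else 0) * (if d i = cm then (1:ℂ) else 0))
        = (fun i => if d i = cm then (1:ℂ) else 0) := by
      funext i; by_cases h : d i = cm <;> simp [h]
    rw [hfun]
  have hPP : P * P = P := by
    rw [hP]
    calc U * E * Uᴴ * (U * E * Uᴴ) = U * E * (Uᴴ * U) * E * Uᴴ := by noncomm_ring
      _ = U * (E * E) * Uᴴ := by rw [hU1]; noncomm_ring
      _ = U * E * Uᴴ := by rw [hEE, Matrix.mul_assoc]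
  have hPh : Pᴴ = P := by
    rw [hP, conjTranspose_mul, conjTranspose_mul, conjTranspose_conjTranspose]
    rw [hE, diagonal_conjTranspose]
    have : star (fun i => if d i = cm then (1:ℂ) else 0) = fun i => if d i = cm then (1:ℂ) else 0 := by
      funext i; by_cases h : d i = cm <;> simp [h]
    rw [this, ← Matrix.mul_assoc]
  have hSdiag : (cm:ℂ) • (1:Mat n) - T = U * diagonal (fun i => ((cm - d i : ℝ) : ℂ)) * Uᴴ := by
    have h0 : diagonal (fun _ : Fin n => ((cm:ℝ) : ℂ)) = (cm:ℂ) • (1 : Mat n) := by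
      ext i j
      by_cases h : i = j <;> simp [diagonal_apply, Matrix.one_apply, h]
    have h1 : (cm:ℂ) • (1:Mat n) = U * diagonal (fun _ => ((cm:ℝ) : ℂ)) * Uᴴ := by
      rw [h0, Matrix.mul_smul, Matrix.mul_one, Matrix.smul_mul, hU2]
    rw [h1, hspec]
    have h2 : diagonal (fun _ : Fin n => ((cm:ℝ) : ℂ)) - diagonal (fun i => ((d i : ℝ) : ℂ))
        = diagonal (fun i => ((cm - d i : ℝ) : ℂ)) := by
      rw [diagonal_sub]; push_cast; rfl
    rw [← h2]
    noncomm_ring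
  have hker : ∀ x, ((cm:ℂ) • (1:Mat n) - T) *ᵥ x = 0 ↔ P *ᵥ x = x := by
    intro x
    constructor
    · intro hx
      rw [hSdiag] at hx
      have hy : diagonal (fun i => ((cm - d i : ℝ) : ℂ)) *ᵥ (Uᴴ *ᵥ x) = 0 := by
        have h2 := congrArg (fun w => Uᴴ *ᵥ w) hx
        simp only [mulVec_zero] at h2
        rw [← mulVec_mulVec, ← mulVec_mulVec, hUU] at h2
        exact h2
      have hEy : E *ᵥ (Uᴴ *ᵥ x) = Uᴴ *ᵥ x := by
        funext i
        have hyi := congrFun hy i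
        rw [mulVec_diagonal] at hyi
        rw [hE, mulVec_diagonal]
        by_cases h : d i = cm
        · simp [h]
        · have hne2 : ((cm - d i : ℝ) : ℂ) ≠ 0 := by
            simp only [ne_eq, Complex.ofReal_eq_zero, sub_eq_zero]
            exact fun hh => h hh.symm
          have hzero : (Uᴴ *ᵥ x) i = 0 := by
            rcases mul_eq_zero.mp hyi with h' | h'
            · exact absurd h' hne2
            · exact h'
          simp [h, hzero]
      rw [hP, ← mulVec_mulVec, ← mulVec_mulVec, hEy, hUUT]
    · intro hx
      have goal2 : ((cm:ℂ) • (1:Mat n) - T) *ᵥ (P *ᵥ x) = 0 := by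
        rw [hSdiag, hP]
        rw [← mulVec_mulVec, ← mulVec_mulVec, ← mulVec_mulVec, ← mulVec_mulVec, hUU]
        have hDE : diagonal (fun i => ((cm - d i : ℝ) : ℂ)) *ᵥ (E *ᵥ (Uᴴ *ᵥ x)) = 0 := by
          funext i
          rw [mulVec_diagonal]
          rw [hE, mulVec_diagonal]
          by_cases h : d i = cm
          · simp [h, sub_self]
          · simp [h]
        rw [hDE, mulVec_zero]
      rwa [hx] at goal2
  refine ⟨P, cm, hcmpos, hPP, hPh, ?_, hker, ?_⟩
  · intro h0
    have hEsingle : E *ᵥ (Pi.single i₀ (1:ℂ) : Fin n → ℂ) = Pi.single i₀ (1:ℂ) := by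
      funext i
      rw [hE, mulVec_diagonal]
      by_cases h : i = i₀
      · subst h; simp [hcm]
      · simp [Pi.single_apply, h]
    have hcol : P *ᵥ (U *ᵥ (Pi.single i₀ (1:ℂ) : Fin n → ℂ)) = U *ᵥ (Pi.single i₀ (1:ℂ) : Fin n → ℂ) := by
      rw [hP, ← mulVec_mulVec, ← mulVec_mulVec, hUU, hEsingle]
    rw [h0, zero_mulVec] at hcol
    have hsz : (Pi.single i₀ (1:ℂ) : Fin n → ℂ) = 0 := by
      have h2 := congrArg (fun w => Uᴴ *ᵥ w) hcol
      simp only [mulVec_zero] at h2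
      rw [hUU] at h2
      exact h2.symm
    have := congrFun hsz i₀
    simp at this
  · rw [hSdiag]
    refine PosSemidef.mul_mul_conjTranspose_same ?_ U
    refine posSemidef_diagonal_iff.mpr fun i => ?_
    rw [Complex.zero_le_real]
    have := hmax i (Finset.mem_univ i)
    linarith

end Stmt9Aux

namespace Stmt9Aux
variable {n k : ℕ}
lemma quad_gram (B : Mat n) (x : Fin n → ℂ) :
    star x ⬝ᵥ ((Bᴴ * B) *ᵥ x) = star (B *ᵥ x) ⬝ᵥ (B *ᵥ x) := by
  rw [← mulVec_mulVec, dotProduct_mulVec, star_mulVec]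

lemma nonneg_mul_conj (z : ℂ) : 0 ≤ z * starRingEnd ℂ z := by
  rw [Complex.mul_conj, Complex.zero_le_real]
  exact Complex.normSq_nonneg z

lemma conj_mul_eq_zero {z : ℂ} (h : z * starRingEnd ℂ z = 0) : z = 0 := by
  rw [Complex.mul_conj] at h
  exact_mod_cast Complex.normSq_eq_zero.mp (by exact_mod_cast h)
end Stmt9Aux

open Stmt9Aux in
/-- If a CPTP map `ℰ(X) = Σ K_α X K_αᴴ` has the pure state `|ψ⟩⟨ψ|` as its unique fixed
point among states, then the only eigenvalue of `ℰ` on the unit circle is `1`, with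
eigenvector `|ψ⟩⟨ψ|`. -/
theorem stmt9 {n k : ℕ}
    (K : Fin k → Matrix (Fin n) (Fin n) ℂ)
    (hK : ∑ α, (K α)ᴴ * K α = 1)
    (ψ : Fin n → ℂ) (hψ : star ψ ⬝ᵥ ψ = 1)
    (hfix : (∑ α, K α * Matrix.vecMulVec ψ (star ψ) * (K α)ᴴ) = Matrix.vecMulVec ψ (star ψ))
    (huniq : ∀ ρ : Matrix (Fin n) (Fin n) ℂ, ρ.PosSemidef → ρ.trace = 1 →
        (∑ α, K α * ρ * (K α)ᴴ) = ρ → ρ = Matrix.vecMulVec ψ (star ψ)) :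
    ∀ (lam : ℂ) (X : Matrix (Fin n) (Fin n) ℂ), X ≠ 0 →
      (∑ α, K α * X * (K α)ᴴ) = lam • X → ‖lam‖ = 1 →
      lam = 1 ∧ ∃ c : ℂ, X = c • Matrix.vecMulVec ψ (star ψ) := by
  classical
  intro lam X hX hEX hlam
  have hψ0 : ψ ≠ 0 := by
    intro h
    rw [h] at hψ
    simp at hψ
  have hll : lam * starRingEnd ℂ lam = 1 := by
    rw [Complex.mul_conj, Complex.normSq_eq_norm_sq, hlam]
    norm_num
  have hll' : starRingEnd ℂ lam * lam = 1 := by rw [mul_comm]; exact hll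
  -- Step 1 : ψ is a joint eigenvector of the Kraus operators
  set c : Fin k → ℂ := fun α => star ψ ⬝ᵥ (K α *ᵥ ψ) with hcdef
  have hfix' : ∑ α, Matrix.vecMulVec (K α *ᵥ ψ) (star (K α *ᵥ ψ)) = Matrix.vecMulVec ψ (star ψ) := by
    rw [← hfix]
    exact Finset.sum_congr rfl fun α _ => (conj_vecMulVec (K α) ψ).symm
  have hKψ : ∀ β, K β *ᵥ ψ = c β • ψ := by
    intro β
    set x : Fin n → ℂ := K β *ᵥ ψ - c β • ψ with hxdef
    have hψx : star ψ ⬝ᵥ x = 0 := by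
      rw [hxdef, dotProduct_sub, dotProduct_smul, hψ, smul_eq_mul, mul_one]
      simp only [hcdef]
      exact sub_self _
    have hxψ : star x ⬝ᵥ ψ = 0 := by rw [dot_conj, hψx, map_zero]
    have hq := congrArg (fun M => star x ⬝ᵥ (M *ᵥ x)) hfix'
    rw [dot_sum] at hq
    have hterm : ∀ α, star x ⬝ᵥ (Matrix.vecMulVec (K α *ᵥ ψ) (star (K α *ᵥ ψ)) *ᵥ x)
        = (star (K α *ᵥ ψ) ⬝ᵥ x) * starRingEnd ℂ (star (K α *ᵥ ψ) ⬝ᵥ x) := by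
      intro α
      rw [vecMulVec_mulVec, dotProduct_smul, smul_eq_mul, dot_conj x (K α *ᵥ ψ)]
    have hrhs : star x ⬝ᵥ (Matrix.vecMulVec ψ (star ψ) *ᵥ x) = 0 := by
      rw [vecMulVec_mulVec, dotProduct_smul, hxψ, smul_zero]
    rw [hrhs] at hq
    have hzero : ∀ α ∈ Finset.univ,
        star x ⬝ᵥ (Matrix.vecMulVec (K α *ᵥ ψ) (star (K α *ᵥ ψ)) *ᵥ x) = 0 := by
      refine (Finset.sum_eq_zero_iff_of_nonneg fun α _ => ?_).mp hq
      rw [hterm α]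
      exact nonneg_mul_conj _
    have hzβ : star (K β *ᵥ ψ) ⬝ᵥ x = 0 := by
      have := hzero β (Finset.mem_univ β)
      rw [hterm β] at this
      exact conj_mul_eq_zero this
    have hxx : star x ⬝ᵥ x = 0 := by
      conv_lhs => rw [hxdef]
      rw [dotProduct_sub, dotProduct_smul]
      rw [dot_conj x (K β *ᵥ ψ), hzβ, map_zero, hxψ, smul_zero, sub_zero]
    have hx0 : x = 0 := dotProduct_star_self_eq_zero.mp hxx
    rw [hxdef, sub_eq_zero] at hx0
    exact hx0
  have hsc : ∑ α, starRingEnd ℂ (c α) * c α = 1 := by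
    have h0 := congrArg (fun M => star ψ ⬝ᵥ (M *ᵥ ψ)) hK
    rw [dot_sum, one_mulVec, hψ] at h0
    rw [← h0]
    refine Finset.sum_congr rfl fun α _ => ?_
    rw [quad_gram, hKψ α, star_smul, smul_dotProduct, dotProduct_smul, hψ]
    simp [mul_comm]
  -- Step 2 : eigenvector of the adjoint map
  have hfX : sandMap K lam X = 0 := by
    show (∑ α, K α * X * (K α)ᴴ) - lam • X = 0
    rw [hEX, sub_self]
  obtain ⟨Y, hYne, hYfix0⟩ := adjoint_kernel (fun A B => adj_pair K lam A B) hX hfX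
  have hY : ∑ α, (K α)ᴴ * Y * K α = starRingEnd ℂ lam • Y := by
    have h0 : (∑ α, (K α)ᴴ * Y * K α) - starRingEnd ℂ lam • Y = 0 := hYfix0
    rwa [sub_eq_zero] at h0
  -- Step 3 : the Schwarz-equality identity
  set T : Matrix (Fin n) (Fin n) ℂ := Yᴴ * Y with hTdef
  set Nm : Fin k → Matrix (Fin n) (Fin n) ℂ :=
    fun α => Y * K α - starRingEnd ℂ lam • (K α * Y) with hNmdef
  have hterm : ∀ α, (Nm α)ᴴ * Nm α
      = (K α)ᴴ * T * K α
        - starRingEnd ℂ lam • (((K α)ᴴ * Yᴴ * K α) * Y)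
        - lam • (Yᴴ * ((K α)ᴴ * Y * K α))
        + Yᴴ * ((K α)ᴴ * K α) * Y := by
    intro α
    have hNmH : (Nm α)ᴴ = (K α)ᴴ * Yᴴ - lam • (Yᴴ * (K α)ᴴ) := by
      simp only [hNmdef, conjTranspose_sub, conjTranspose_smul, conjTranspose_mul,
        RCLike.star_def, Complex.conj_conj]
    have hNmE : Nm α = Y * K α - starRingEnd ℂ lam • (K α * Y) := by rw [hNmdef]
    rw [hNmH, hNmE]
    rw [Matrix.sub_mul, Matrix.mul_sub, Matrix.mul_sub,
      Matrix.smul_mul, Matrix.smul_mul, Matrix.mul_smul, Matrix.mul_smul,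
      smul_smul, hll, one_smul]
    have e1 : (K α)ᴴ * Yᴴ * (Y * K α) = (K α)ᴴ * T * K α := by rw [hTdef]; noncomm_ring
    have e2 : (K α)ᴴ * Yᴴ * (K α * Y) = ((K α)ᴴ * Yᴴ * K α) * Y := by noncomm_ring
    have e3 : Yᴴ * (K α)ᴴ * (Y * K α) = Yᴴ * ((K α)ᴴ * Y * K α) := by noncomm_ring
    have e4 : Yᴴ * (K α)ᴴ * (K α * Y) = Yᴴ * ((K α)ᴴ * K α) * Y := by noncomm_ring
    rw [e1, e2, e3, e4]
    abel
  have hsumY : ∑ α, (K α)ᴴ * Yᴴ * K α = lam • Yᴴ := by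
    have h0 := congrArg conjTranspose hY
    rw [conjTranspose_sum, conjTranspose_smul] at h0
    calc ∑ α, (K α)ᴴ * Yᴴ * K α = ∑ α, ((K α)ᴴ * Y * K α)ᴴ := by
          refine Finset.sum_congr rfl fun α _ => ?_
          simp only [conjTranspose_mul, conjTranspose_conjTranspose]
          noncomm_ring
      _ = lam • Yᴴ := by
          rw [h0]
          congr 1
          simp [RCLike.star_def, Complex.conj_conj]
  have hZid : ∑ α, (Nm α)ᴴ * Nm α = (∑ α, (K α)ᴴ * T * K α) - T := by
    calc ∑ α, (Nm α)ᴴ * Nm α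
        = ∑ α, ((K α)ᴴ * T * K α
            - starRingEnd ℂ lam • (((K α)ᴴ * Yᴴ * K α) * Y)
            - lam • (Yᴴ * ((K α)ᴴ * Y * K α))
            + Yᴴ * ((K α)ᴴ * K α) * Y) := Finset.sum_congr rfl fun α _ => hterm α
      _ = (∑ α, (K α)ᴴ * T * K α)
            - starRingEnd ℂ lam • ((∑ α, (K α)ᴴ * Yᴴ * K α) * Y)
            - lam • (Yᴴ * (∑ α, (K α)ᴴ * Y * K α))
            + Yᴴ * (∑ α, (K α)ᴴ * K α) * Y := by
          rw [Finset.sum_add_distrib, Finset.sum_sub_distrib, Finset.sum_sub_distrib]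
          rw [← Finset.smul_sum, ← Finset.sum_mul]
          rw [← Finset.smul_sum, ← Finset.mul_sum]
          rw [← Finset.sum_mul, ← Finset.mul_sum]
      _ = (∑ α, (K α)ᴴ * T * K α) - T := by
          rw [hsumY, hY, hK]
          rw [Matrix.smul_mul, Matrix.mul_smul, smul_smul, smul_smul, hll', hll]
          simp only [one_smul, Matrix.mul_one]
          rw [← hTdef]
          abel
  -- Step 4 : evaluate at ψ
  have hqT : star ψ ⬝ᵥ ((∑ α, (K α)ᴴ * T * K α) *ᵥ ψ) = star ψ ⬝ᵥ (T *ᵥ ψ) := by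
    rw [dot_sum]
    have hterm2 : ∀ α ∈ Finset.univ, star ψ ⬝ᵥ (((K α)ᴴ * T * K α) *ᵥ ψ)
        = (starRingEnd ℂ (c α) * c α) * (star ψ ⬝ᵥ (T *ᵥ ψ)) := by
      intro α _
      rw [quad_sandwich, hKψ α, star_smul, mulVec_smul, smul_dotProduct, dotProduct_smul]
      simp only [smul_eq_mul, Pi.star_apply, RCLike.star_def]
      ring
    rw [Finset.sum_congr rfl hterm2, ← Finset.sum_mul, hsc, one_mul]
  have hNψ : ∀ α, Nm α *ᵥ ψ = 0 := by
    have hq2 := congrArg (fun M => star ψ ⬝ᵥ (M *ᵥ ψ)) hZid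
    rw [dot_sum, Matrix.sub_mulVec, dotProduct_sub, hqT, sub_self] at hq2
    intro α
    have hz := (Finset.sum_eq_zero_iff_of_nonneg fun β _ => by
      rw [quad_gram]
      exact dotProduct_star_self_nonneg _).mp hq2 α (Finset.mem_univ α)
    rw [quad_gram] at hz
    exact dotProduct_star_self_eq_zero.mp hz
  set v : Fin n → ℂ := Y *ᵥ ψ with hvdef
  have hKv : ∀ α, K α *ᵥ v = (lam * c α) • v := by
    intro α
    have h0 := hNψ α
    have hNmE : Nm α = Y * K α - starRingEnd ℂ lam • (K α * Y) := by rw [hNmdef]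
    rw [hNmE, Matrix.sub_mulVec, smul_mulVec, ← mulVec_mulVec, ← mulVec_mulVec,
      hKψ α, mulVec_smul, sub_eq_zero] at h0
    -- h0 : c α • (Y *ᵥ ψ) = cl • (K α *ᵥ (Y *ᵥ ψ))
    have h1 := congrArg (fun w => lam • w) h0
    simp only [smul_smul] at h1
    rw [hll, one_smul] at h1
    rw [← hvdef] at h1
    exact h1.symm
  -- common eigenvector of all Kraus operators must be parallel to ψ
  have common : ∀ (φ : Fin n → ℂ) (dd : Fin k → ℂ), φ ≠ 0 → (∀ α, K α *ᵥ φ = dd α • φ) →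
      ∃ σ : ℂ, σ ≠ 0 ∧ φ = σ • ψ := by
    intro φ dd hφ hdd
    have hsφ : star φ ⬝ᵥ φ ≠ 0 := fun h => hφ (dotProduct_star_self_eq_zero.mp h)
    have hsφ0 : 0 ≤ star φ ⬝ᵥ φ := dotProduct_star_self_nonneg φ
    set s : ℂ := star φ ⬝ᵥ φ with hsdef
    have hsim : s.im = 0 := by
      have := Complex.le_def.mp hsφ0
      simpa using this.2.symm
    have hsre : 0 ≤ s.re := by
      have := Complex.le_def.mp hsφ0
      simpa using this.1
    have hsval : ((s.re : ℝ) : ℂ) = s := by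
      apply Complex.ext <;> simp [hsim]
    have hdd1 : ∑ α, starRingEnd ℂ (dd α) * dd α = 1 := by
      have h0 := congrArg (fun M => star φ ⬝ᵥ (M *ᵥ φ)) hK
      rw [dot_sum, one_mulVec] at h0
      have heach : ∀ α ∈ Finset.univ, star φ ⬝ᵥ (((K α)ᴴ * K α) *ᵥ φ)
          = (starRingEnd ℂ (dd α) * dd α) * s := by
        intro α _
        rw [quad_gram, hdd α, star_smul, smul_dotProduct, dotProduct_smul]
        simp only [smul_eq_mul, Pi.star_apply, RCLike.star_def]
        rw [← hsdef]
        ring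
      rw [Finset.sum_congr rfl heach, ← Finset.sum_mul] at h0
      have h1 : (∑ α, starRingEnd ℂ (dd α) * dd α) * s = 1 * s := by
        rw [one_mul]; exact h0
      exact mul_right_cancel₀ hsφ h1
    set M0 : Matrix (Fin n) (Fin n) ℂ := Matrix.vecMulVec φ (star φ) with hM0def
    have hfixM : ∑ α, K α * M0 * (K α)ᴴ = M0 := by
      calc ∑ α, K α * M0 * (K α)ᴴ
          = ∑ α, Matrix.vecMulVec (K α *ᵥ φ) (star (K α *ᵥ φ)) :=
            Finset.sum_congr rfl fun α _ => conj_vecMulVec (K α) φ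
        _ = ∑ α, (starRingEnd ℂ (dd α) * dd α) • M0 := by
            refine Finset.sum_congr rfl fun α _ => ?_
            rw [hdd α]
            ext i j
            simp only [Matrix.vecMulVec_apply, Pi.star_apply, Pi.smul_apply, smul_eq_mul,
              Matrix.smul_apply, hM0def, RCLike.star_def, _root_.map_mul]
            ring
        _ = M0 := by
            rw [← Finset.sum_smul, hdd1, one_smul]
    have hρpsd : (s⁻¹ • M0).PosSemidef := by
      have hsinv : s⁻¹ = (((s.re)⁻¹ : ℝ) : ℂ) := by
        conv_lhs => rw [← hsval]
        rw [← Complex.ofReal_inv]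
      rw [hsinv]
      exact psd_smul_real (psd_vecMulVec φ) (by positivity)
    have hρtr : (s⁻¹ • M0).trace = 1 := by
      rw [trace_smul, hM0def, trace_vecMulVec_star, smul_eq_mul, ← hsdef,
        inv_mul_cancel₀ hsφ]
    have hρfix := smul_fix (L := K) s⁻¹ hfixM
    have hρeq := huniq _ hρpsd hρtr hρfix
    have hM0eq : M0 = s • Matrix.vecMulVec ψ (star ψ) := by
      have h2 := congrArg (fun M => s • M) hρeq
      simp only [smul_smul] at h2
      rw [mul_inv_cancel₀ hsφ, one_smul] at h2
      exact h2
    have hφeq := congrArg (fun M => M *ᵥ φ) hM0eq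
    rw [hM0def, vecMulVec_mulVec, ← hsdef, smul_mulVec, vecMulVec_mulVec] at hφeq
    -- hφeq : s • φ = s • ((star ψ ⬝ᵥ φ) • ψ)
    have hφψ : φ = (star ψ ⬝ᵥ φ) • ψ := by
      have h3 := congrArg (fun w => s⁻¹ • w) hφeq
      simp only [smul_smul] at h3
      rw [inv_mul_cancel₀ hsφ, one_smul, ← mul_assoc, inv_mul_cancel₀ hsφ, one_mul] at h3
      exact h3
    refine ⟨star ψ ⬝ᵥ φ, ?_, hφψ⟩
    intro h4
    rw [h4, zero_smul] at hφψ
    exact hφ hφψ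
  -- Step 5 : λ = 1
  have hlam1 : lam = 1 := by
    by_cases hv : v = 0
    · exfalso
      have hTψ : T *ᵥ ψ = 0 := by
        rw [hTdef, ← mulVec_mulVec, ← hvdef, hv, mulVec_zero]
      have hTne : T ≠ 0 := by
        rw [hTdef]
        intro h
        exact hYne (conjTranspose_mul_self_eq_zero.mp h)
      have hTpsd : T.PosSemidef := hTdef ▸ posSemidef_conjTranspose_mul_self Y
      obtain ⟨P, cm, hcm, hPP, hPh, hPne, hker, hSpsd⟩ := top_proj hTpsd hTne
      set S : Matrix (Fin n) (Fin n) ℂ := (cm:ℂ) • (1 : Matrix (Fin n) (Fin n) ℂ) - T with hSdef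
      have hZpsd : ((∑ α, (K α)ᴴ * T * K α) - T).PosSemidef := by
        rw [← hZid]
        exact psd_sum fun α => posSemidef_conjTranspose_mul_self (Nm α)
      have hsplit : (∑ α, (K α)ᴴ * S * K α) = S - ((∑ α, (K α)ᴴ * T * K α) - T) := by
        calc ∑ α, (K α)ᴴ * S * K α
            = ∑ α, ((cm:ℂ) • ((K α)ᴴ * K α) - (K α)ᴴ * T * K α) := by
              refine Finset.sum_congr rfl fun α _ => ?_
              rw [hSdef, Matrix.mul_sub, Matrix.sub_mul, Matrix.mul_smul, Matrix.mul_one,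
                Matrix.smul_mul]
          _ = (cm:ℂ) • (∑ α, (K α)ᴴ * K α) - (∑ α, (K α)ᴴ * T * K α) := by
              rw [Finset.sum_sub_distrib, Finset.smul_sum]
          _ = S - ((∑ α, (K α)ᴴ * T * K α) - T) := by
              rw [hK, hSdef]
              abel
      have hinv : ∀ x, S *ᵥ x = 0 → ∀ α, S *ᵥ (K α *ᵥ x) = 0 := by
        intro x hx α
        have ha : 0 ≤ star x ⬝ᵥ ((∑ β, (K β)ᴴ * S * K β) *ᵥ x) :=
          (psd_sum fun β => hSpsd.conjTranspose_mul_mul_same (K β)).dotProduct_mulVec_nonneg x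
        have hb : 0 ≤ star x ⬝ᵥ (((∑ β, (K β)ᴴ * T * K β) - T) *ᵥ x) := hZpsd.dotProduct_mulVec_nonneg x
        have hq0 : star x ⬝ᵥ ((∑ β, (K β)ᴴ * S * K β) *ᵥ x)
            + star x ⬝ᵥ (((∑ β, (K β)ᴴ * T * K β) - T) *ᵥ x) = 0 := by
          rw [hsplit, Matrix.sub_mulVec, dotProduct_sub, hx, dotProduct_zero]
          ring
        have ha0 : star x ⬝ᵥ ((∑ β, (K β)ᴴ * S * K β) *ᵥ x) = 0 :=
          le_antisymm (by rw [eq_neg_of_add_eq_zero_left hq0]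
                          exact neg_nonpos_of_nonneg hb) ha
        rw [dot_sum] at ha0
        have heach := (Finset.sum_eq_zero_iff_of_nonneg fun β _ => by
            rw [quad_sandwich]
            exact hSpsd.dotProduct_mulVec_nonneg _).mp ha0 α (Finset.mem_univ α)
        rw [quad_sandwich] at heach
        exact (hSpsd.dotProduct_mulVec_zero_iff (K α *ᵥ x)).mp heach
      have hKP : ∀ α, P * (K α * P) = K α * P := by
        intro α
        apply ext_of_mulVec
        intro x
        have h1 : P *ᵥ (P *ᵥ x) = P *ᵥ x := by rw [mulVec_mulVec, hPP]
        have h2 : S *ᵥ (P *ᵥ x) = 0 := (hker _).mpr h1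
        have h3 : S *ᵥ (K α *ᵥ (P *ᵥ x)) = 0 := hinv _ h2 α
        have h4 := (hker _).mp h3
        rw [← mulVec_mulVec, ← mulVec_mulVec]
        exact h4
      have hsumL : ∑ α, (K α * P)ᴴ * (K α * P) = P := by
        calc ∑ α, (K α * P)ᴴ * (K α * P) = ∑ α, P * ((K α)ᴴ * K α) * P := by
              refine Finset.sum_congr rfl fun α _ => ?_
              rw [conjTranspose_mul, hPh]
              noncomm_ring
          _ = P * (∑ α, (K α)ᴴ * K α) * P := by
              rw [← Finset.sum_mul, ← Finset.mul_sum]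
          _ = P := by rw [hK, Matrix.mul_one, hPP]
      obtain ⟨ρ, hρpsd, hρtr, hρsupp, hρfix⟩ :=
        exists_fixed_state (L := fun α => K α * P) hPP hPh hPne hsumL hKP
      have hEρ : ∑ α, K α * ρ * (K α)ᴴ = ρ := by
        calc ∑ α, K α * ρ * (K α)ᴴ = ∑ α, (K α * P) * ρ * (K α * P)ᴴ := by
              refine Finset.sum_congr rfl fun α _ => ?_
              conv_lhs => rw [← hρsupp]
              rw [conjTranspose_mul, hPh]
              noncomm_ring
          _ = ρ := hρfix
      have hρψ := huniq ρ hρpsd hρtr hEρ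
      have h5 : P * Matrix.vecMulVec ψ (star ψ) * P = Matrix.vecMulVec ψ (star ψ) := by
        rw [← hρψ]
        exact hρsupp
      have ha2 : Matrix.vecMulVec (P *ᵥ ψ) (star (P *ᵥ ψ)) = Matrix.vecMulVec ψ (star ψ) := by
        rw [← conj_vecMulVec P ψ, hPh]
        exact h5
      have hPψ : P *ᵥ ψ = ψ := by
        have h6 := congrArg (fun M => M *ᵥ ψ) ha2
        rw [vecMulVec_mulVec, vecMulVec_mulVec, hψ, one_smul] at h6
        have h7 := congrArg (fun w => P *ᵥ w) h6
        rw [mulVec_smul, mulVec_mulVec, hPP] at h7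
        exact h7.symm.trans h6
      have h8 : S *ᵥ ψ = 0 := (hker ψ).mpr hPψ
      rw [hSdef, Matrix.sub_mulVec, smul_mulVec, one_mulVec, hTψ, sub_zero] at h8
      rcases smul_eq_zero.mp h8 with h9 | h9
      · exact (by exact_mod_cast hcm.ne' : ((cm:ℝ):ℂ) ≠ 0) h9
      · exact hψ0 h9
    · obtain ⟨σ, hσ, hφψ⟩ := common v (fun α => lam * c α) hv hKv
      have hex : ∃ α, c α ≠ 0 := by
        by_contra hall
        push_neg at hall
        rw [Finset.sum_eq_zero (fun α _ => by rw [hall α]; simp)] at hsc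
        exact one_ne_zero hsc.symm
      obtain ⟨α, hcα⟩ := hex
      have h1 : K α *ᵥ v = (lam * c α) • v := hKv α
      rw [hφψ, mulVec_smul, hKψ α, smul_smul, smul_smul] at h1
      have h2 := smul_vec_cancel hψ0 h1
      have hne : c α * σ ≠ 0 := mul_ne_zero hcα hσ
      have h3 : (c α * σ) * 1 = (c α * σ) * lam := by linear_combination h2
      exact (mul_left_cancel₀ hne h3).symm
  -- Part B : X is a multiple of the fixed state
  refine ⟨hlam1, ?_⟩
  rw [hlam1, one_smul] at hEX
  have hXH : (∑ α, K α * Xᴴ * (K α)ᴴ) = Xᴴ := by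
    have h0 := congrArg conjTranspose hEX
    rw [conjTranspose_sum] at h0
    calc (∑ α, K α * Xᴴ * (K α)ᴴ) = ∑ α, (K α * X * (K α)ᴴ)ᴴ := by
          refine Finset.sum_congr rfl fun α _ => ?_
          simp only [conjTranspose_mul, conjTranspose_conjTranspose]
          noncomm_ring
      _ = Xᴴ := h0
  have fixpsd : ∀ W : Matrix (Fin n) (Fin n) ℂ, W.PosSemidef →
      (∑ α, K α * W * (K α)ᴴ) = W → W = W.trace • Matrix.vecMulVec ψ (star ψ) := by
    intro W hWpsd hWfix
    by_cases hW0 : W = 0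
    · rw [hW0]
      simp
    · have htne : W.trace ≠ 0 := fun h => hW0 (psd_trace_zero hWpsd h)
      have ht0 : 0 ≤ W.trace := psd_trace_nonneg hWpsd
      have htim : W.trace.im = 0 := by
        have := Complex.le_def.mp ht0
        simpa using this.2.symm
      have htval : ((W.trace.re : ℝ) : ℂ) = W.trace := by
        apply Complex.ext <;> simp [htim]
      have htre : 0 ≤ W.trace.re := by
        have := Complex.le_def.mp ht0
        simpa using this.1
      have hρpsd : (W.trace⁻¹ • W).PosSemidef := by
        have hwinv : W.trace⁻¹ = (((W.trace.re)⁻¹ : ℝ) : ℂ) := by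
          conv_lhs => rw [← htval]
          rw [← Complex.ofReal_inv]
        rw [hwinv]
        exact psd_smul_real hWpsd (by positivity)
      have hρtr : (W.trace⁻¹ • W).trace = 1 := by
        rw [trace_smul, smul_eq_mul, inv_mul_cancel₀ htne]
      have hρfix := smul_fix (L := K) W.trace⁻¹ hWfix
      have h2 := congrArg (fun M => W.trace • M) (huniq _ hρpsd hρtr hρfix)
      simp only [smul_smul] at h2
      rw [mul_inv_cancel₀ htne, one_smul] at h2
      exact h2
  have hermfix : ∀ H : Matrix (Fin n) (Fin n) ℂ, H.IsHermitian →
      (∑ α, K α * H * (K α)ᴴ) = H → ∃ r : ℂ, H = r • Matrix.vecMulVec ψ (star ψ) := by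
    intro H hH hHfix
    obtain ⟨A, B, hA, hB, hdec, hAf, hBf⟩ :=
      fix_pos_parts (L := K) (Matrix.one_mul 1) Matrix.conjTranspose_one
        (by simpa using hK) (fun α => Matrix.one_mul (K α)) hH
        (by simpa using hHfix)
    refine ⟨A.trace - B.trace, ?_⟩
    rw [hdec]
    conv_lhs => rw [fixpsd A hA hAf, fixpsd B hB hBf]
    rw [sub_smul]
  obtain ⟨r1, hr1⟩ := hermfix (X + Xᴴ)
    (by show (X + Xᴴ)ᴴ = _
        rw [conjTranspose_add, conjTranspose_conjTranspose, add_comm])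
    (by rw [show (∑ α, K α * (X + Xᴴ) * (K α)ᴴ)
          = (∑ α, K α * X * (K α)ᴴ) + (∑ α, K α * Xᴴ * (K α)ᴴ) by
        rw [← Finset.sum_add_distrib]
        exact Finset.sum_congr rfl fun α _ => by rw [Matrix.mul_add, Matrix.add_mul]]
        rw [hEX, hXH])
  obtain ⟨r2, hr2⟩ := hermfix (Complex.I • (Xᴴ - X))
    (by show (Complex.I • (Xᴴ - X))ᴴ = _
        rw [conjTranspose_smul, conjTranspose_sub, conjTranspose_conjTranspose]
        rw [show star Complex.I = -Complex.I by simp [Complex.star_def, Complex.conj_I]]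
        rw [neg_smul, ← smul_neg, neg_sub])
    (by apply smul_fix
        rw [show (∑ α, K α * (Xᴴ - X) * (K α)ᴴ)
            = (∑ α, K α * Xᴴ * (K α)ᴴ) - (∑ α, K α * X * (K α)ᴴ) by
          rw [← Finset.sum_sub_distrib]
          exact Finset.sum_congr rfl fun α _ => by rw [Matrix.mul_sub, Matrix.sub_mul]]
        rw [hEX, hXH])
  refine ⟨(2:ℂ)⁻¹ * (r1 + Complex.I * r2), ?_⟩
  have hXeq : X = (2:ℂ)⁻¹ • ((X + Xᴴ) + Complex.I • (Complex.I • (Xᴴ - X))) := by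
    have h1 : (X + Xᴴ) + Complex.I • (Complex.I • (Xᴴ - X)) = (2:ℂ) • X := by
      rw [smul_smul, Complex.I_mul_I, neg_one_smul, neg_sub, two_smul]
      abel
    rw [h1, smul_smul]
    norm_num
  rw [hXeq, hr1, hr2, smul_smul, ← add_smul, smul_smul]
end

section
/- Let L₁, …, L_m be pairwise commuting operators on a finite-dimensional Hilbert space and let ρ ⪰ 0 with support projection P (projection onto the range of ρ). If Σ_i L_i ρ L_i† = (1/2) Σ_i {L_i†L_i, ρ}, then (I−P) L_i P = 0 for all i, i.e., the support of ρ is invariant under each L_i. -/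
set_option maxHeartbeats 1000000


open Matrix
open scoped ComplexOrder

lemma stmt13_dot_sum {n m : ℕ} (M : Fin m → Matrix (Fin n) (Fin n) ℂ) (v : Fin n → ℂ) :
    star v ⬝ᵥ (∑ j, M j) *ᵥ v = ∑ j, star v ⬝ᵥ (M j) *ᵥ v := by
  have h1 : (∑ j, M j) *ᵥ v = ∑ j, (M j) *ᵥ v :=
    map_sum (AddMonoidHom.mk' (fun A : Matrix (Fin n) (Fin n) ℂ => A *ᵥ v)
      (fun A B => Matrix.add_mulVec A B v)) M Finset.univ
  rw [h1]
  simp only [dotProduct, Finset.sum_apply, Finset.mul_sum]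
  exact Finset.sum_comm

lemma stmt13_eq_of_mulVec_eq {n : ℕ} {A B : Matrix (Fin n) (Fin n) ℂ}
    (h : ∀ v, A.mulVec v = B.mulVec v) : A = B := by
  ext j k
  have := congrFun (h (Pi.single k 1)) j
  simpa [Matrix.mulVec_single] using this

/-- If pairwise commuting operators `L_i` satisfy the stationarity equation
`Σ L_i ρ L_iᴴ = ½ Σ {L_iᴴL_i, ρ}` for a PSD `ρ` with support projection `P`, then
`(I − P) L_i P = 0` for every `i`. -/
theorem stmt13 {n m : ℕ}
    (L : Fin m → Matrix (Fin n) (Fin n) ℂ)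
    (hcomm : ∀ i j, L i * L j = L j * L i)
    (ρ : Matrix (Fin n) (Fin n) ℂ) (hρ : ρ.PosSemidef)
    (P : Matrix (Fin n) (Fin n) ℂ) (hP : P.IsHermitian) (hPproj : P * P = P)
    (hPrange : ∀ v : Fin n → ℂ, (∃ w, v = ρ.mulVec w) ↔ P.mulVec v = v)
    (hstat : ∑ i, L i * ρ * (L i)ᴴ
        = (2 : ℂ)⁻¹ • ∑ i, ((L i)ᴴ * L i * ρ + ρ * ((L i)ᴴ * L i))) :
    ∀ i, (1 - P) * L i * P = 0 := by
  set Q : Matrix (Fin n) (Fin n) ℂ := 1 - P with hQ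
  have hPρ : P * ρ = ρ := by
    apply stmt13_eq_of_mulVec_eq
    intro v
    rw [← Matrix.mulVec_mulVec]
    exact (hPrange (ρ.mulVec v)).mp ⟨v, rfl⟩
  have hρP : ρ * P = ρ := by
    have := congrArg Matrix.conjTranspose hPρ
    simpa [Matrix.conjTranspose_mul, hP.eq, hρ.isHermitian.eq] using this
  have hQρ : Q * ρ = 0 := by rw [hQ, sub_mul, one_mul, hPρ, sub_self]
  have hρQ : ρ * Q = 0 := by rw [hQ, mul_sub, mul_one, hρP, sub_self]
  have hQH : Qᴴ = Q := by simp [hQ, hP.eq]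
  -- multiply the stationarity equation by Q on both sides
  have hsum : ∑ i, (Q * L i) * ρ * (Q * L i)ᴴ = 0 := by
    have h1 : Q * (∑ i, L i * ρ * (L i)ᴴ) * Q
        = Q * ((2 : ℂ)⁻¹ • ∑ i, ((L i)ᴴ * L i * ρ + ρ * ((L i)ᴴ * L i))) * Q := by
      rw [hstat]
    have h2 : Q * ((2 : ℂ)⁻¹ • ∑ i, ((L i)ᴴ * L i * ρ + ρ * ((L i)ᴴ * L i))) * Q = 0 := by
      rw [Matrix.mul_smul, Matrix.smul_mul, Finset.mul_sum, Finset.sum_mul]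
      rw [Finset.sum_eq_zero, smul_zero]
      intro i _
      have key : Q * ((L i)ᴴ * L i * ρ + ρ * ((L i)ᴴ * L i)) * Q
          = Q * (L i)ᴴ * L i * (ρ * Q) + (Q * ρ) * ((L i)ᴴ * L i * Q) := by
        noncomm_ring
      rw [key, hρQ, hQρ]
      simp
    calc ∑ i, (Q * L i) * ρ * (Q * L i)ᴴ
        = ∑ i, Q * (L i * ρ * (L i)ᴴ) * Q := by
          refine Finset.sum_congr rfl fun i _ => ?_
          rw [Matrix.conjTranspose_mul, hQH]
          noncomm_ring
      _ = Q * (∑ i, L i * ρ * (L i)ᴴ) * Q := by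
          rw [Finset.mul_sum, Finset.sum_mul]
      _ = 0 := by rw [h1, h2]
  -- each PSD summand is zero
  have hterm : ∀ i, (Q * L i) * ρ * (Q * L i)ᴴ = 0 := by
    intro i
    have hMpsd : ∀ j, ((Q * L j) * ρ * (Q * L j)ᴴ).PosSemidef :=
      fun j => hρ.mul_mul_conjTranspose_same _
    apply stmt13_eq_of_mulVec_eq
    intro v
    have hq : ∀ j ∈ Finset.univ,
        (0 : ℂ) ≤ star v ⬝ᵥ ((Q * L j) * ρ * (Q * L j)ᴴ).mulVec v :=
      fun j _ => (hMpsd j).dotProduct_mulVec_nonneg v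
    have hqsum : ∑ j, star v ⬝ᵥ ((Q * L j) * ρ * (Q * L j)ᴴ).mulVec v = 0 := by
      have h0 : star v ⬝ᵥ (∑ j, (Q * L j) * ρ * (Q * L j)ᴴ).mulVec v = 0 := by
        rw [hsum]; simp
      rw [stmt13_dot_sum] at h0
      exact h0
    have hz : star v ⬝ᵥ ((Q * L i) * ρ * (Q * L i)ᴴ).mulVec v = 0 :=
      (Finset.sum_eq_zero_iff_of_nonneg hq).mp hqsum i (Finset.mem_univ i)
    have := ((hMpsd i).dotProduct_mulVec_zero_iff v).mp hz
    simpa using this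
  -- deduce (Q * L i) * ρ = 0
  have hQLρ : ∀ i, (Q * L i) * ρ = 0 := by
    intro i
    obtain ⟨S, hSH, hSS⟩ : ∃ S : Matrix (Fin n) (Fin n) ℂ, Sᴴ = S ∧ S * S = ρ := by
      open scoped MatrixOrder in
      exact ⟨CFC.sqrt ρ, (CFC.sqrt_nonneg ρ).posSemidef.isHermitian.eq,
        CFC.sqrt_mul_sqrt_self ρ hρ.nonneg⟩
    have hBB : ((Q * L i) * S) * ((Q * L i) * S)ᴴ = 0 := by
      rw [Matrix.conjTranspose_mul, hSH]
      calc (Q * L i) * S * (S * (Q * L i)ᴴ)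
          = (Q * L i) * (S * S) * (Q * L i)ᴴ := by noncomm_ring
        _ = (Q * L i) * ρ * (Q * L i)ᴴ := by rw [hSS]
        _ = 0 := hterm i
    have hB0 : (Q * L i) * S = 0 := Matrix.self_mul_conjTranspose_eq_zero.mp hBB
    calc (Q * L i) * ρ = ((Q * L i) * S) * S := by
          conv_rhs => rw [mul_assoc, hSS]
      _ = 0 := by rw [hB0, zero_mul]
  -- conclude
  intro i
  apply stmt13_eq_of_mulVec_eq
  intro v
  have hPv : ∃ w, P.mulVec v = ρ.mulVec w := by
    have : P.mulVec (P.mulVec v) = P.mulVec v := by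
      rw [Matrix.mulVec_mulVec, hPproj]
    exact (hPrange (P.mulVec v)).mpr this
  obtain ⟨w, hw⟩ := hPv
  calc ((1 - P) * L i * P).mulVec v
      = (Q * L i).mulVec (P.mulVec v) := by
        rw [← Matrix.mulVec_mulVec, hQ]
    _ = ((Q * L i) * ρ).mulVec w := by rw [hw, Matrix.mulVec_mulVec]
    _ = (0 : Matrix (Fin n) (Fin n) ℂ).mulVec v := by rw [hQLρ i]; simp
end

section
/- Consider the Hilbert space H = (ℂ^{d+1})^{⊗N}, an invertible operator X on H, and jump operators L_{α,i} = X |0⟩_i⟨α| X⁻¹ for i ∈ {1,…,N}, α ∈ {1,…,d}, where |0⟩_i⟨α| acts on site i. Then the Lindbladian ℒ = Σ_{i,α} (L_{α,i}(·)L_{α,i}† − ½{L_{α,i}†L_{α,i}, ·}) satisfies: ℒ(ρ) = 0 for a PSD ρ if and only if ρ is proportional to |ψ⟩⟨ψ| with |ψ⟩ = X|0⟩^{⊗N}. -/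
open Matrix
open scoped ComplexOrder

/-- The single-site operator `|0⟩_i⟨α|` acting on tensor factor `i` of
`(ℂ^{d+1})^{⊗N}`, realized on the basis indexed by `Fin N → Fin (d+1)`. -/
noncomputable def siteOp (N d : ℕ) (i : Fin N) (α : Fin (d + 1)) :
    Matrix (Fin N → Fin (d + 1)) (Fin N → Fin (d + 1)) ℂ :=
  Matrix.of fun s t => if t i = α ∧ s = Function.update t i 0 then 1 else 0

namespace Stmt14Aux

lemma star_dot_mulVec {n : Type*} [Fintype n] (P : Matrix n n ℂ) (a b : n → ℂ) :
    star a ⬝ᵥ P.mulVec b = star (Pᴴ.mulVec a) ⬝ᵥ b := by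
  rw [Matrix.star_mulVec, conjTranspose_conjTranspose, Matrix.dotProduct_mulVec]

lemma psd_mulVec_eq_zero {n : Type*} [Fintype n] [DecidableEq n] {ρ : Matrix n n ℂ}
    (hρ : ρ.PosSemidef) {x : n → ℂ} (h : star x ⬝ᵥ ρ.mulVec x = 0) : ρ.mulVec x = 0 := by
  exact (Matrix.PosSemidef.dotProduct_mulVec_zero_iff hρ x).mp h

lemma siteOp_mulVec (N d : ℕ) (i : Fin N) (α : Fin (d+1)) (y : (Fin N → Fin (d+1)) → ℂ)
    (s : Fin N → Fin (d+1)) :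
    (siteOp N d i α).mulVec y s = if s i = 0 then y (Function.update s i α) else 0 := by
  simp only [siteOp, Matrix.mulVec, Matrix.of_apply, dotProduct, ite_mul, one_mul, zero_mul]
  by_cases h : s i = 0
  · rw [if_pos h, Finset.sum_eq_single (Function.update s i α)]
    · rw [if_pos]
      refine ⟨Function.update_self .., ?_⟩
      rw [Function.update_idem]
      conv_lhs => rw [show s = Function.update s i (s i) from (Function.update_eq_self i s).symm, h]
    · intro t _ ht
      rw [if_neg]
      rintro ⟨h1, h2⟩
      apply ht
      rw [h2, Function.update_idem, ← h1, Function.update_eq_self]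
    · intro hmem; exact absurd (Finset.mem_univ _) hmem
  · rw [if_neg h, Finset.sum_eq_zero]
    intro t _
    rw [if_neg]
    rintro ⟨-, h2⟩
    exact h (by rw [h2, Function.update_self])

def wt {N d : ℕ} (t : Fin N → Fin (d+1)) : ℕ := (Finset.univ.filter fun i => t i ≠ 0).card

lemma wt_update {N d : ℕ} (t : Fin N → Fin (d+1)) (i : Fin N) (α : Fin (d+1))
    (ht : t i = 0) (hα : α ≠ 0) : wt (Function.update t i α) = wt t + 1 := by
  unfold wt
  have hset : (Finset.univ.filter fun j => Function.update t i α j ≠ 0)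
      = insert i (Finset.univ.filter fun j => t j ≠ 0) := by
    ext j
    by_cases hj : j = i
    · subst hj; simp [Function.update_self, hα]
    · simp [Function.update_apply, hj]
  rw [hset, Finset.card_insert_of_notMem (by simp [ht])]

lemma wt_le {N d : ℕ} (t : Fin N → Fin (d+1)) : wt t ≤ N := by
  calc wt t ≤ Finset.univ.card := Finset.card_filter_le _ _
  _ = N := by simp

lemma mul_vecMulVec {n : Type*} [Fintype n] (M : Matrix n n ℂ) (u v : n → ℂ) :
    M * vecMulVec u v = vecMulVec (M.mulVec u) v := by
  ext s t
  simp [Matrix.mul_apply, vecMulVec_apply, Matrix.mulVec, dotProduct, Finset.sum_mul, mul_assoc]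

lemma vecMulVec_mul {n : Type*} [Fintype n] (M : Matrix n n ℂ) (u v : n → ℂ) :
    vecMulVec u v * M = vecMulVec u (v ᵥ* M) := by
  ext s t
  simp [Matrix.mul_apply, vecMulVec_apply, Matrix.vecMul, dotProduct, Finset.mul_sum, mul_assoc]

lemma sum_mulVec {ι n : Type*} [DecidableEq ι] [Fintype n] (s : Finset ι) (f : ι → Matrix n n ℂ) (v : n → ℂ) :
    (∑ i ∈ s, f i) *ᵥ v = ∑ i ∈ s, (f i) *ᵥ v := by
  induction s using Finset.induction with
  | empty => simp [Matrix.zero_mulVec]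
  | insert _ _ h ih => simp [Finset.sum_insert h, Matrix.add_mulVec, ih]

lemma dotProduct_finsum {ι n : Type*} [DecidableEq ι] [Fintype n] (s : Finset ι) (f : ι → (n → ℂ)) (v : n → ℂ) :
    v ⬝ᵥ (∑ i ∈ s, f i) = ∑ i ∈ s, v ⬝ᵥ (f i) := by
  induction s using Finset.induction with
  | empty => simp
  | insert _ _ h ih => simp [Finset.sum_insert h, dotProduct_add, ih]

end Stmt14Aux

/-- For jump operators `L_{α,i} = X |0⟩_i⟨α| X⁻¹` (`X` invertible, `α ≠ 0`), the
GKLS generator `ℒ = Σ_{i,α} (L ρ Lᴴ − ½{LᴴL, ρ})` annihilates a PSD `ρ` iff `ρ` is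
proportional to `|ψ⟩⟨ψ|` with `ψ = X|0⟩^{⊗N}`. -/
theorem stmt14 (N d : ℕ)
    (X : Matrix (Fin N → Fin (d + 1)) (Fin N → Fin (d + 1)) ℂ) (hX : IsUnit X)
    (L : Fin N → Fin (d + 1) →
        Matrix (Fin N → Fin (d + 1)) (Fin N → Fin (d + 1)) ℂ)
    (hL : ∀ i α, L i α = X * siteOp N d i α * X⁻¹)
    (ψ : (Fin N → Fin (d + 1)) → ℂ)
    (hψ : ψ = X.mulVec fun s => if s = (fun _ => 0) then 1 else 0)
    (ρ : Matrix (Fin N → Fin (d + 1)) (Fin N → Fin (d + 1)) ℂ)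
    (hρ : ρ.PosSemidef) :
    (∑ i : Fin N, ∑ α ∈ Finset.univ.filter (fun α : Fin (d + 1) => α ≠ 0),
        (L i α * ρ * (L i α)ᴴ
          - (2 : ℂ)⁻¹ • ((L i α)ᴴ * L i α * ρ + ρ * ((L i α)ᴴ * L i α)))) = 0
    ↔ ∃ c : ℂ, ρ = c • Matrix.vecMulVec ψ (star ψ) := by
  classical
  open Stmt14Aux in
  have hdet : IsUnit X.det := (Matrix.isUnit_iff_isUnit_det X).mp hX
  have hXY : X * X⁻¹ = 1 := Matrix.mul_nonsing_inv X hdet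
  have hYX : X⁻¹ * X = 1 := Matrix.nonsing_inv_mul X hdet
  set e : (Fin N → Fin (d+1)) → ℂ := fun s => if s = (fun _ => 0) then 1 else 0 with he
  have hYψ : X⁻¹.mulVec ψ = e := by
    rw [hψ, Matrix.mulVec_mulVec, hYX, Matrix.one_mulVec]
  have he0 : e (fun _ => 0) = 1 := by simp [he]
  have hψ0 : ψ ≠ 0 := by
    intro h
    have h1 : e = 0 := by rw [← hYψ, h, Matrix.mulVec_zero]
    have h2 := congrFun h1 (fun _ => 0)
    rw [he0] at h2
    exact one_ne_zero h2
  -- L kills ψ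
  have hSψ : ∀ (i : Fin N) (α : Fin (d+1)), α ≠ 0 → (L i α).mulVec ψ = 0 := by
    intro i α hα
    rw [hL, ← Matrix.mulVec_mulVec, ← Matrix.mulVec_mulVec, hYψ]
    have hse : (siteOp N d i α).mulVec e = 0 := by
      funext s
      simp only [siteOp_mulVec, he, Pi.zero_apply]
      have hne : Function.update s i α ≠ (fun _ => 0) := by
        intro hcon
        exact hα (by rw [← Function.update_self i α s, hcon])
      simp [hne]
    rw [hse, Matrix.mulVec_zero]
  -- relation X⁻¹ ∘ L = siteOp ∘ X⁻¹
  have hSmul : ∀ (i : Fin N) (α : Fin (d+1)) (x : (Fin N → Fin (d+1)) → ℂ),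
      X⁻¹ *ᵥ ((L i α) *ᵥ x) = (siteOp N d i α) *ᵥ (X⁻¹ *ᵥ x) := by
    intro i α x
    rw [hL, Matrix.mulVec_mulVec, Matrix.mulVec_mulVec]
    rw [show X * siteOp N d i α * X⁻¹ = X * (siteOp N d i α * X⁻¹) from Matrix.mul_assoc ..,
      ← Matrix.mul_assoc, hYX, Matrix.one_mul]
  have hXcancel : ∀ x : (Fin N → Fin (d+1)) → ℂ, X *ᵥ (X⁻¹ *ᵥ x) = x := by
    intro x; rw [Matrix.mulVec_mulVec, hXY, Matrix.one_mulVec]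
  -- maximal-product lemma: any nonzero invariant set contains a dark vector
  have hmax : ∀ (V : ((Fin N → Fin (d+1)) → ℂ) → Prop),
      (∀ u, V u → ∀ i α, α ≠ 0 → V ((L i α) *ᵥ u)) →
      ∀ x, V x → x ≠ 0 → ∃ y, V y ∧ y ≠ 0 ∧ ∀ i α, α ≠ 0 → (L i α) *ᵥ y = 0 := by
    intro V hV
    suffices H : ∀ m : ℕ, ∀ x, V x → x ≠ 0 → (∀ t, m < wt t → (X⁻¹ *ᵥ x) t = 0) →
        ∃ y, V y ∧ y ≠ 0 ∧ ∀ i α, α ≠ 0 → (L i α) *ᵥ y = 0 by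
      intro x hx hx0
      exact H N x hx hx0 (fun t ht => absurd ht (by have := wt_le (d := d) t; omega))
    intro m
    induction m with
    | zero =>
      intro x hx hx0 hsupp
      refine ⟨x, hx, hx0, ?_⟩
      intro i α hα
      have h1 : (siteOp N d i α) *ᵥ (X⁻¹ *ᵥ x) = 0 := by
        funext s
        rw [siteOp_mulVec]
        split_ifs with hs
        · exact hsupp _ (by rw [wt_update s i α hs hα]; omega)
        · rfl
      have h2 : X⁻¹ *ᵥ ((L i α) *ᵥ x) = 0 := by rw [hSmul, h1]
      rw [← hXcancel ((L i α) *ᵥ x), h2, Matrix.mulVec_zero]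
    | succ m ih =>
      intro x hx hx0 hsupp
      by_cases hd : ∀ i α, α ≠ 0 → (L i α) *ᵥ x = 0
      · exact ⟨x, hx, hx0, hd⟩
      · push_neg at hd
        obtain ⟨i, α, hα, hne⟩ := hd
        apply ih ((L i α) *ᵥ x) (hV x hx i α hα) hne
        intro t ht
        rw [hSmul, siteOp_mulVec]
        split_ifs with hti
        · exact hsupp _ (by rw [wt_update t i α hti hα]; omega)
        · rfl
  -- dark vectors are multiples of ψ
  have hdark_char : ∀ y : (Fin N → Fin (d+1)) → ℂ,
      (∀ i α, α ≠ 0 → (L i α) *ᵥ y = 0) → ∃ lam : ℂ, y = lam • ψ := by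
    intro y hy
    set z := X⁻¹ *ᵥ y with hz
    have hzz : ∀ t, t ≠ (fun _ => 0) → z t = 0 := by
      intro t ht
      obtain ⟨i, hi⟩ : ∃ i, t i ≠ 0 := by
        by_contra hcon; push_neg at hcon; exact ht (funext hcon)
      have h1 : (siteOp N d i (t i)) *ᵥ z = 0 := by
        rw [hz, ← hSmul, hy i (t i) hi, Matrix.mulVec_zero]
      have h2 := congrFun h1 (Function.update t i 0)
      rw [siteOp_mulVec, if_pos (Function.update_self ..), Function.update_idem,
        Function.update_eq_self, Pi.zero_apply] at h2
      exact h2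
    refine ⟨z (fun _ => 0), ?_⟩
    have hze : z = z (fun _ => 0) • e := by
      funext t
      by_cases ht : t = (fun _ => 0)
      · subst ht; rw [Pi.smul_apply, he0, smul_eq_mul, mul_one]
      · rw [hzz t ht, Pi.smul_apply, smul_eq_mul, he]
        simp only []
        rw [if_neg ht, mul_zero]
    rw [hψ, ← Matrix.mulVec_smul, ← hze, hz, hXcancel]
  constructor
  · -- hard direction
    intro hsum
    by_cases hρ0 : ρ = 0
    · exact ⟨0, by rw [hρ0, zero_smul]⟩
    have hherm : ρᴴ = ρ := hρ.1
    -- key extraction lemma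
    have key : ∀ w : (Fin N → Fin (d+1)) → ℂ,
        (∀ i α, α ≠ 0 → star w ⬝ᵥ ((L i α)ᴴ * L i α * ρ) *ᵥ w = 0
            ∧ star w ⬝ᵥ (ρ * ((L i α)ᴴ * L i α)) *ᵥ w = 0) →
        ∀ i α, α ≠ 0 → ρ *ᵥ ((L i α)ᴴ *ᵥ w) = 0 := by
      intro w hw
      have expand : ∀ (F : Fin N → Fin (d+1) → Matrix (Fin N → Fin (d+1)) (Fin N → Fin (d+1)) ℂ),
          star w ⬝ᵥ (∑ i : Fin N, ∑ α ∈ Finset.univ.filter (fun α : Fin (d+1) => α ≠ 0), F i α) *ᵥ w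
            = ∑ i : Fin N, ∑ α ∈ Finset.univ.filter (fun α : Fin (d+1) => α ≠ 0),
                star w ⬝ᵥ (F i α) *ᵥ w := by
        intro F
        rw [Stmt14Aux.sum_mulVec, dotProduct_finsum]
        exact Finset.sum_congr rfl fun i _ => by rw [Stmt14Aux.sum_mulVec, dotProduct_finsum]
      have h0 : star w ⬝ᵥ (∑ i : Fin N, ∑ α ∈ Finset.univ.filter (fun α : Fin (d+1) => α ≠ 0),
          (L i α * ρ * (L i α)ᴴ
            - (2 : ℂ)⁻¹ • ((L i α)ᴴ * L i α * ρ + ρ * ((L i α)ᴴ * L i α)))) *ᵥ w = 0 := by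
        rw [hsum, Matrix.zero_mulVec, dotProduct_zero]
      rw [expand] at h0
      have h2 : (∑ i : Fin N, ∑ α ∈ Finset.univ.filter (fun α : Fin (d+1) => α ≠ 0),
          star ((L i α)ᴴ *ᵥ w) ⬝ᵥ ρ *ᵥ ((L i α)ᴴ *ᵥ w)) = 0 := by
        rw [← h0]
        refine Finset.sum_congr rfl fun i _ => Finset.sum_congr rfl fun α hα => ?_
        rw [Finset.mem_filter] at hα
        obtain ⟨hwa, hwb⟩ := hw i α hα.2
        symm
        rw [Matrix.sub_mulVec, dotProduct_sub, Matrix.smul_mulVec, dotProduct_smul,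
          Matrix.add_mulVec, dotProduct_add, hwa, hwb, add_zero, smul_zero, sub_zero,
          show L i α * ρ * (L i α)ᴴ = L i α * (ρ * (L i α)ᴴ) from Matrix.mul_assoc ..,
          ← Matrix.mulVec_mulVec, star_dot_mulVec, ← Matrix.mulVec_mulVec]
      intro i α hα
      apply psd_mulVec_eq_zero hρ
      have hnn : ∀ j ∈ (Finset.univ : Finset (Fin N)),
          0 ≤ ∑ β ∈ Finset.univ.filter (fun β : Fin (d+1) => β ≠ 0),
              star ((L j β)ᴴ *ᵥ w) ⬝ᵥ ρ *ᵥ ((L j β)ᴴ *ᵥ w) :=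
        fun j _ => Finset.sum_nonneg fun β _ => hρ.dotProduct_mulVec_nonneg _
      have h3 := (Finset.sum_eq_zero_iff_of_nonneg hnn).mp h2 i (Finset.mem_univ i)
      have h4 := (Finset.sum_eq_zero_iff_of_nonneg
        (fun β _ => hρ.dotProduct_mulVec_nonneg ((L i β)ᴴ *ᵥ w))).mp h3 α (by simp [hα])
      exact h4
    -- kernel invariance
    have hker : ∀ w, ρ *ᵥ w = 0 → ∀ i α, α ≠ 0 → ρ *ᵥ ((L i α)ᴴ *ᵥ w) = 0 := by
      intro w hw
      apply key
      intro i α hα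
      constructor
      · rw [← Matrix.mulVec_mulVec, hw, Matrix.mulVec_zero, dotProduct_zero]
      · rw [← Matrix.mulVec_mulVec, star_dot_mulVec, hherm, hw, star_zero, zero_dotProduct]
    -- ψ-codark
    have hpsiker : ∀ i α, α ≠ 0 → ρ *ᵥ ((L i α)ᴴ *ᵥ ψ) = 0 := by
      apply key
      intro i α hα
      have hP : ((L i α)ᴴ * L i α) *ᵥ ψ = 0 := by
        rw [← Matrix.mulVec_mulVec, hSψ i α hα, Matrix.mulVec_zero]
      constructor
      · rw [← Matrix.mulVec_mulVec, star_dot_mulVec, conjTranspose_mul,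
          conjTranspose_conjTranspose, hP, star_zero, zero_dotProduct]
      · rw [← Matrix.mulVec_mulVec, hP, Matrix.mulVec_zero, dotProduct_zero]
    -- the subspace Uh = (ker ρ)ᗮ as a predicate
    set Uh : ((Fin N → Fin (d+1)) → ℂ) → Prop :=
      fun u => ∀ z, ρ *ᵥ z = 0 → star z ⬝ᵥ u = 0 with hUh
    have hUA : ∀ u, Uh u → ∀ i α, α ≠ 0 → Uh ((L i α) *ᵥ u) := by
      intro u hu i α hα z hz
      rw [star_dot_mulVec]
      exact hu _ (hker z hz i α hα)
    have hUρ : ∀ w, Uh (ρ *ᵥ w) := by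
      intro w z hz
      rw [star_dot_mulVec, hherm, hz, star_zero, zero_dotProduct]
    have hUψdot : ∀ u, Uh u → ∀ i α, α ≠ 0 → star ψ ⬝ᵥ ((L i α) *ᵥ u) = 0 := by
      intro u hu i α hα
      rw [star_dot_mulVec]
      exact hu _ (hpsiker i α hα)
    -- ψ ∈ Uh
    have hUψ : Uh ψ := by
      obtain ⟨w, hw⟩ : ∃ w, ρ *ᵥ w ≠ 0 := by
        by_contra hcon
        push_neg at hcon
        apply hρ0
        ext s t
        have h1 := congrFun (hcon (Pi.single t 1)) s
        rw [Matrix.mulVec, dotProduct_single, mul_one, Pi.zero_apply] at h1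
        rw [h1, Matrix.zero_apply]
      obtain ⟨y, hyU, hy0, hyd⟩ := hmax Uh hUA (ρ *ᵥ w) (hUρ w) hw
      obtain ⟨lam, hlam⟩ := hdark_char y hyd
      have hlam0 : lam ≠ 0 := by
        rintro rfl; rw [zero_smul] at hlam; exact hy0 hlam
      intro z hz
      have h1 := hyU z hz
      rw [hlam, dotProduct_smul, smul_eq_mul] at h1
      exact (mul_eq_zero.mp h1).resolve_left hlam0
    -- everything in Uh ∩ ψᗮ is zero
    have hV2 : ∀ u, Uh u → star ψ ⬝ᵥ u = 0 → u = 0 := by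
      intro u huU huψ
      by_contra hu0
      obtain ⟨y, ⟨hyU, hyψ⟩, hy0, hyd⟩ := hmax (fun v => Uh v ∧ star ψ ⬝ᵥ v = 0)
        (fun v hv i α hα => ⟨hUA v hv.1 i α hα, hUψdot v hv.1 i α hα⟩) u ⟨huU, huψ⟩ hu0
      obtain ⟨lam, rfl⟩ := hdark_char y hyd
      have hlam0 : lam ≠ 0 := fun h => hy0 (by rw [h, zero_smul])
      rw [dotProduct_smul, smul_eq_mul] at hyψ
      have h1 := (mul_eq_zero.mp hyψ).resolve_left hlam0
      exact hψ0 (dotProduct_star_self_eq_zero.mp h1)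
    set nψ : ℂ := star ψ ⬝ᵥ ψ with hnψdef
    have hnψ : nψ ≠ 0 := fun h => hψ0 (dotProduct_star_self_eq_zero.mp h)
    -- ρ ψ = μ • ψ
    obtain ⟨μ, hμψ⟩ : ∃ μ : ℂ, ρ *ᵥ ψ = μ • ψ := by
      refine ⟨(star ψ ⬝ᵥ (ρ *ᵥ ψ)) / nψ, ?_⟩
      have h1 : ρ *ᵥ ψ - ((star ψ ⬝ᵥ (ρ *ᵥ ψ)) / nψ) • ψ = 0 := by
        apply hV2
        · intro z hz
          rw [dotProduct_sub, dotProduct_smul, hUρ ψ z hz, hUψ z hz, smul_zero, sub_zero]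
        · rw [dotProduct_sub, dotProduct_smul, smul_eq_mul, ← hnψdef,
            div_mul_cancel₀ _ hnψ, sub_self]
      exact sub_eq_zero.mp h1
    -- all columns are multiples of ψ
    have hcol : ∀ v, ρ *ᵥ v = ((star ψ ⬝ᵥ v) / nψ * μ) • ψ := by
      intro v
      have h1 : ρ *ᵥ (v - ((star ψ ⬝ᵥ v) / nψ) • ψ) = 0 := by
        apply hV2
        · exact hUρ _
        · rw [star_dot_mulVec, hherm, hμψ, star_smul, smul_dotProduct, dotProduct_sub,
            dotProduct_smul, smul_eq_mul, smul_eq_mul, ← hnψdef, div_mul_cancel₀ _ hnψ,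
            sub_self, mul_zero]
      rw [Matrix.mulVec_sub, Matrix.mulVec_smul, hμψ, smul_smul, sub_eq_zero] at h1
      exact h1
    refine ⟨μ / nψ, ?_⟩
    ext s t
    have h1 := congrFun (hcol (Pi.single t 1)) s
    rw [Matrix.mulVec, dotProduct_single, mul_one, dotProduct_single] at h1
    rw [h1, Matrix.smul_apply, vecMulVec_apply, Pi.smul_apply, smul_eq_mul, smul_eq_mul,
      Pi.star_apply]
    ring
  · -- easy direction
    rintro ⟨c, rfl⟩
    apply Finset.sum_eq_zero
    intro i _
    apply Finset.sum_eq_zero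
    intro α hα
    rw [Finset.mem_filter] at hα
    have hLψ0 := hSψ i α hα.2
    have hvv0 : Matrix.vecMulVec (0 : (Fin N → Fin (d+1)) → ℂ) (star ψ) = 0 := by
      ext s t; simp [vecMulVec_apply]
    have hvv0' : Matrix.vecMulVec ψ (0 : (Fin N → Fin (d+1)) → ℂ) = 0 := by
      ext s t; simp [vecMulVec_apply]
    have hLρ : L i α * (c • Matrix.vecMulVec ψ (star ψ)) = 0 := by
      rw [Matrix.mul_smul, Stmt14Aux.mul_vecMulVec, hLψ0, hvv0, smul_zero]
    have hρL : (c • Matrix.vecMulVec ψ (star ψ)) * (L i α)ᴴ = 0 := by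
      rw [Matrix.smul_mul, Stmt14Aux.vecMulVec_mul, ← Matrix.star_mulVec, hLψ0, star_zero, hvv0',
        smul_zero]
    rw [show L i α * (c • Matrix.vecMulVec ψ (star ψ)) * (L i α)ᴴ
          = (L i α * (c • Matrix.vecMulVec ψ (star ψ))) * (L i α)ᴴ from rfl,
      hLρ, Matrix.zero_mul,
      show (L i α)ᴴ * L i α * (c • Matrix.vecMulVec ψ (star ψ))
          = (L i α)ᴴ * (L i α * (c • Matrix.vecMulVec ψ (star ψ))) from Matrix.mul_assoc ..,
      hLρ, Matrix.mul_zero,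
      show (c • Matrix.vecMulVec ψ (star ψ)) * ((L i α)ᴴ * L i α)
          = ((c • Matrix.vecMulVec ψ (star ψ)) * (L i α)ᴴ) * L i α from (Matrix.mul_assoc ..).symm,
      hρL, Matrix.zero_mul]
    simp
end

section
/- Let h and X be Hermitian operators on a finite-dimensional Hilbert space with 0 ⪯ X ⪯ I, and set R(h) := √(I−X) h √(I−X) − h + ½{h, X}. Then ‖R(h)‖ ≤ 2‖h‖‖X‖². -/
open Matrix
open scoped ComplexOrder Matrix.Norms.L2Operator

/-- The square root of a positive semidefinite matrix, as defined in Mathlib (Dec 2024),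
`Matrix.PosSemidef.sqrt`, which has since been removed. -/
noncomputable def Matrix.PosSemidef.sqrt {𝕜 : Type*} [RCLike 𝕜] {n : Type*} [Fintype n]
    [DecidableEq n] {A : Matrix n n 𝕜} (hA : A.PosSemidef) : Matrix n n 𝕜 :=
  hA.1.eigenvectorUnitary.1 * diagonal ((↑) ∘ (√·) ∘ hA.1.eigenvalues) *
    (star hA.1.eigenvectorUnitary : Matrix n n 𝕜)

namespace Stmt16Aux

lemma re_star_dot {n : ℕ} (v : Fin n → ℂ) :
    Complex.re (dotProduct (star v) v) = ∑ i, ‖v i‖^2 := by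
  rw [dotProduct, Complex.re_sum]
  congr 1; ext i
  simp [Complex.normSq_apply, Complex.sq_norm, Complex.mul_re]

lemma norm_le_of_posSemidef {n : ℕ} (A : Matrix (Fin n) (Fin n) ℂ) (c : ℝ) (hc : 0 ≤ c)
    (hP : (((c:ℂ)^2) • 1 - Aᴴ * A).PosSemidef) : ‖A‖ ≤ c := by
  rw [Matrix.l2_opNorm_def]
  apply ContinuousLinearMap.opNorm_le_bound _ hc
  intro x
  have key := hP.dotProduct_mulVec_nonneg (WithLp.equiv 2 (Fin n → ℂ) x)
  set v : Fin n → ℂ := WithLp.equiv 2 (Fin n → ℂ) x with hv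
  have hx : ((Matrix.toEuclideanLin.trans LinearMap.toContinuousLinearMap) A) x
      = (WithLp.equiv 2 (Fin n → ℂ)).symm (A *ᵥ v) := rfl
  rw [hx]
  have expand : dotProduct (star v) ((((c:ℂ)^2) • 1 - Aᴴ * A) *ᵥ v)
      = ((c:ℂ)^2) * dotProduct (star v) v
        - dotProduct (star (A *ᵥ v)) (A *ᵥ v) := by
    rw [Matrix.sub_mulVec, dotProduct_sub, Matrix.smul_mulVec, Matrix.one_mulVec,
      dotProduct_smul, smul_eq_mul]
    congr 1
    rw [Matrix.star_mulVec, ← dotProduct_mulVec, Matrix.mulVec_mulVec]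
  rw [expand] at key
  have key' : Complex.re (dotProduct (star (A *ᵥ v)) (A *ᵥ v))
      ≤ c^2 * Complex.re (dotProduct (star v) v) := by
    have h1 := (Complex.le_def.mp key).1
    simp only [Complex.zero_re, Complex.sub_re, Complex.mul_re, ← Complex.ofReal_pow,
      Complex.ofReal_re, Complex.ofReal_im] at h1
    linarith
  rw [re_star_dot, re_star_dot] at key'
  have hnx : ‖x‖^2 = ∑ i, ‖v i‖^2 := by
    rw [EuclideanSpace.norm_eq, Real.sq_sqrt]; · rfl
    · positivity
  have hAx : ‖(WithLp.equiv 2 (Fin n → ℂ)).symm (A *ᵥ v)‖^2 = ∑ i, ‖(A *ᵥ v) i‖^2 := by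
    rw [EuclideanSpace.norm_eq, Real.sq_sqrt]; · rfl
    · positivity
  have hsq : ‖(WithLp.equiv 2 (Fin n → ℂ)).symm (A *ᵥ v)‖^2 ≤ (c * ‖x‖)^2 := by
    rw [hAx, mul_pow, hnx]; exact key'
  have h2 : (0:ℝ) ≤ c * ‖x‖ := by positivity
  exact le_of_pow_le_pow_left₀ two_ne_zero h2 hsq

lemma norm_unitary_le {n : ℕ} (U : Matrix.unitaryGroup (Fin n) ℂ) :
    ‖(U : Matrix (Fin n) (Fin n) ℂ)‖ ≤ 1 := by
  apply norm_le_of_posSemidef _ 1 zero_le_one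
  have h : (U : Matrix (Fin n) (Fin n) ℂ)ᴴ * U = 1 := by
    rw [← Matrix.star_eq_conjTranspose]
    exact Matrix.mem_unitaryGroup_iff'.mp U.2
  rw [h]
  have : (((1:ℝ):ℂ)^2) • (1 : Matrix (Fin n) (Fin n) ℂ) - 1 = 0 := by norm_num
  rw [this]
  exact Matrix.PosSemidef.zero

lemma norm_diagonal_le {n : ℕ} (d : Fin n → ℂ) (c : ℝ) (hc : 0 ≤ c)
    (hd : ∀ i, ‖d i‖ ≤ c) : ‖(Matrix.diagonal d)‖ ≤ c := by
  apply norm_le_of_posSemidef _ c hc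
  have h : ((c:ℂ)^2) • (1 : Matrix (Fin n) (Fin n) ℂ) - (Matrix.diagonal d)ᴴ * Matrix.diagonal d
      = Matrix.diagonal (fun i => ((c:ℂ)^2 - star (d i) * d i)) := by
    ext i j
    by_cases hij : i = j
    · subst hij
      simp [Matrix.diagonal_apply_eq, Matrix.one_apply_eq, Matrix.mul_apply,
        Matrix.diagonal_apply, Finset.sum_ite_eq, Matrix.sub_apply]
    · simp [Matrix.diagonal_apply_ne _ hij, Matrix.one_apply_ne hij, Matrix.mul_apply,
        Matrix.diagonal_apply, hij, Matrix.sub_apply]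
  rw [h]
  refine Matrix.posSemidef_diagonal_iff.mpr fun i => ?_
  have h2 : star (d i) * d i = ((‖d i‖^2 : ℝ) : ℂ) := by
    rw [Complex.star_def, ← Complex.normSq_eq_conj_mul_self, Complex.normSq_eq_norm_sq]
  rw [h2, ← Complex.ofReal_pow, ← Complex.ofReal_sub, Complex.zero_le_real]
  nlinarith [hd i, norm_nonneg (d i)]

lemma norm_conj_le {n : ℕ} (U : Matrix.unitaryGroup (Fin n) ℂ) (d : Fin n → ℂ) (c : ℝ)
    (hc : 0 ≤ c) (hd : ∀ i, ‖d i‖ ≤ c) :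
    ‖(U : Matrix (Fin n) (Fin n) ℂ) * Matrix.diagonal d * star (U : Matrix (Fin n) (Fin n) ℂ)‖
      ≤ c := by
  have h1 : ‖(U : Matrix (Fin n) (Fin n) ℂ)‖ ≤ 1 := norm_unitary_le U
  have h3 : ‖star (U : Matrix (Fin n) (Fin n) ℂ)‖ ≤ 1 :=
    norm_unitary_le ⟨star (U : Matrix (Fin n) (Fin n) ℂ), Unitary.star_mem U.2⟩
  have h2 : ‖Matrix.diagonal d‖ ≤ c := norm_diagonal_le d c hc hd
  have s1 : ‖(U : Matrix (Fin n) (Fin n) ℂ) * Matrix.diagonal d *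
      star (U : Matrix (Fin n) (Fin n) ℂ)‖ ≤
      ‖(U : Matrix (Fin n) (Fin n) ℂ) * Matrix.diagonal d‖ *
      ‖star (U : Matrix (Fin n) (Fin n) ℂ)‖ := Matrix.l2_opNorm_mul _ _
  have s2 : ‖(U : Matrix (Fin n) (Fin n) ℂ) * Matrix.diagonal d‖ ≤
      ‖(U : Matrix (Fin n) (Fin n) ℂ)‖ * ‖Matrix.diagonal d‖ := Matrix.l2_opNorm_mul _ _
  have s3 : ‖(U : Matrix (Fin n) (Fin n) ℂ) * Matrix.diagonal d‖ *
      ‖star (U : Matrix (Fin n) (Fin n) ℂ)‖ ≤ (1 * c) * 1 := by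
    apply mul_le_mul _ h3 (norm_nonneg _) (by positivity)
    exact s2.trans (mul_le_mul h1 h2 (norm_nonneg _) zero_le_one)
  linarith

lemma abs_eigenvalue_le_norm {n : ℕ} {A : Matrix (Fin n) (Fin n) ℂ} (hA : A.IsHermitian)
    (i : Fin n) : |hA.eigenvalues i| ≤ ‖A‖ := by
  have hv : ‖hA.eigenvectorBasis i‖ = 1 := hA.eigenvectorBasis.orthonormal.1 i
  have h1 : ‖(EuclideanSpace.equiv (Fin n) ℂ).symm (A *ᵥ ⇑(hA.eigenvectorBasis i))‖
      ≤ ‖A‖ * ‖hA.eigenvectorBasis i‖ := Matrix.l2_opNorm_mulVec A (hA.eigenvectorBasis i)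
  rw [hA.mulVec_eigenvectorBasis i] at h1
  have h2 : (EuclideanSpace.equiv (Fin n) ℂ).symm (hA.eigenvalues i • ⇑(hA.eigenvectorBasis i))
      = hA.eigenvalues i • (hA.eigenvectorBasis i) := rfl
  rw [h2, norm_smul, hv, Real.norm_eq_abs] at h1
  simpa using h1

lemma eigenvalues_le_one {n : ℕ} {X : Matrix (Fin n) (Fin n) ℂ} (hX0 : X.PosSemidef)
    (hX1 : ((1 : Matrix (Fin n) (Fin n) ℂ) - X).PosSemidef) (i : Fin n) :
    hX0.1.eigenvalues i ≤ 1 := by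
  set v := hX0.1.eigenvectorBasis i with hv
  have hv1 : ‖v‖ = 1 := hX0.1.eigenvectorBasis.orthonormal.1 i
  have hdot : dotProduct (star ⇑v) ⇑v = 1 := by
    rw [dotProduct_comm, ← EuclideanSpace.inner_eq_star_dotProduct]
    rw [@inner_self_eq_norm_sq_to_K ℂ]
    rw [hv1]
    norm_num
  have key := hX1.dotProduct_mulVec_nonneg ⇑v
  rw [Matrix.sub_mulVec, Matrix.one_mulVec, hX0.1.mulVec_eigenvectorBasis i,
    dotProduct_sub, dotProduct_smul, hdot] at key
  rw [Complex.real_smul, mul_one] at key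
  have hc : ((1 - hX0.1.eigenvalues i : ℝ) : ℂ) = 1 - (hX0.1.eigenvalues i : ℂ) := by
    push_cast; ring
  rw [← hc, Complex.zero_le_real] at key
  linarith

lemma sqrt_remainder_bound {t : ℝ} (h0 : 0 ≤ t) (h1 : t ≤ 1) :
    |Real.sqrt (1 - t) - 1 + t/2| ≤ t^2/2 := by
  have hnn : 0 ≤ Real.sqrt (1 - t) := Real.sqrt_nonneg _
  have hs : Real.sqrt (1 - t) ^ 2 = 1 - t := Real.sq_sqrt (by linarith)
  rw [abs_le]
  constructor
  · nlinarith [sq_nonneg (Real.sqrt (1 - t) + (1 - t/2 - t^2/2)),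
      sq_nonneg (Real.sqrt (1 - t) - (1 - t/2 - t^2/2)), sq_nonneg t, sq_nonneg (1-t)]
  · nlinarith [sq_nonneg (Real.sqrt (1 - t) - (1 - t/2)), sq_nonneg (Real.sqrt (1-t) + (1 - t/2))]

lemma conj_mul_conj {n : ℕ} {U : Matrix (Fin n) (Fin n) ℂ} (hU : star U * U = 1)
    (a b : Fin n → ℂ) :
    (U * Matrix.diagonal a * star U) * (U * Matrix.diagonal b * star U)
      = U * Matrix.diagonal (fun i => a i * b i) * star U := by
  have : (U * Matrix.diagonal a * star U) * (U * Matrix.diagonal b * star U)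
      = U * (Matrix.diagonal a * ((star U * U) * Matrix.diagonal b)) * star U := by
    noncomm_ring
  rw [this, hU, one_mul, Matrix.diagonal_mul_diagonal]

lemma norm_triple_mul_le {n : ℕ} (A B C : Matrix (Fin n) (Fin n) ℂ) :
    ‖A * B * C‖ ≤ ‖A‖ * ‖B‖ * ‖C‖ := by
  refine (Matrix.l2_opNorm_mul _ _).trans ?_
  exact mul_le_mul_of_nonneg_right (Matrix.l2_opNorm_mul _ _) (norm_nonneg _)

end Stmt16Aux

open Stmt16Aux in
/-- For Hermitian `h` and `0 ⪯ X ⪯ I`, the remainder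
`R(h) = √(I−X) h √(I−X) − h + ½{h, X}` satisfies `‖R(h)‖ ≤ 2‖h‖‖X‖²`. -/
theorem stmt16 {n : ℕ} (h X : Matrix (Fin n) (Fin n) ℂ)
    (hh : h.IsHermitian)
    (hX0 : X.PosSemidef)
    (hX1 : ((1 : Matrix (Fin n) (Fin n) ℂ) - X).PosSemidef) :
    ‖hX1.sqrt * h * hX1.sqrt - h + (2 : ℂ)⁻¹ • (h * X + X * h)‖
      ≤ 2 * ‖h‖ * ‖X‖ ^ 2 := by
  classical
  set e : X.IsHermitian := hX0.1 with he
  set U : Matrix (Fin n) (Fin n) ℂ := (e.eigenvectorUnitary : Matrix (Fin n) (Fin n) ℂ) with hUdef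
  set μ : Fin n → ℝ := e.eigenvalues with hμdef
  have hUU : star U * U = 1 := Matrix.mem_unitaryGroup_iff'.mp e.eigenvectorUnitary.2
  have hUU' : U * star U = 1 := Matrix.mem_unitaryGroup_iff.mp e.eigenvectorUnitary.2
  have hμ0 : ∀ i, 0 ≤ μ i := fun i => hX0.eigenvalues_nonneg i
  have hμ1 : ∀ i, μ i ≤ 1 := fun i => eigenvalues_le_one hX0 hX1 i
  have hμnorm : ∀ i, |μ i| ≤ ‖X‖ := fun i => abs_eigenvalue_le_norm e i
  have hXspec : X = U * Matrix.diagonal (fun i => (μ i : ℂ)) * star U := by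
    convert e.spectral_theorem using 2
    rw [Unitary.conjStarAlgAut_apply]; rfl
  -- the square root
  set S : Matrix (Fin n) (Fin n) ℂ :=
    U * Matrix.diagonal (fun i => ((Real.sqrt (1 - μ i) : ℝ) : ℂ)) * star U with hSdef
  have hSpsd : S.PosSemidef := by
    rw [hSdef, Matrix.star_eq_conjTranspose]
    apply Matrix.PosSemidef.mul_mul_conjTranspose_same
    refine Matrix.posSemidef_diagonal_iff.mpr fun i => ?_
    exact Complex.zero_le_real.mpr (Real.sqrt_nonneg _)
  have hSsq : S ^ 2 = 1 - X := by
    rw [pow_two, hSdef, conj_mul_conj hUU]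
    have hd : (fun i => ((Real.sqrt (1 - μ i) : ℝ) : ℂ) * ((Real.sqrt (1 - μ i) : ℝ) : ℂ))
        = fun i => (1 : ℂ) - (μ i : ℂ) := by
      funext i
      rw [← Complex.ofReal_mul, Real.mul_self_sqrt (by linarith [hμ1 i] : (0:ℝ) ≤ 1 - μ i)]
      push_cast
      ring
    rw [hd]
    have : Matrix.diagonal (fun i => (1 : ℂ) - (μ i : ℂ))
        = 1 - Matrix.diagonal (fun i => (μ i : ℂ)) := by
      rw [← Matrix.diagonal_one, ← Matrix.diagonal_sub]
    rw [this, Matrix.mul_sub, Matrix.sub_mul, mul_one, hUU', ← hXspec]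
  have hSeq : hX1.sqrt = S := by
    have hXsa : IsSelfAdjoint X := e
    have h1X : cfc (fun t : ℝ => 1 - t) X = 1 - X := by
      rw [cfc_sub (fun _ => (1:ℝ)) (fun t => t) X, cfc_const_one ℝ X, cfc_id' ℝ X]
    have hA : hX1.sqrt = cfc Real.sqrt (1 - X) := by
      rw [hX1.1.cfc_eq, Matrix.IsHermitian.cfc, Unitary.conjStarAlgAut_apply]
      rfl
    have hB : S = cfc (fun t => Real.sqrt (1 - t)) X := by
      rw [e.cfc_eq, Matrix.IsHermitian.cfc, Unitary.conjStarAlgAut_apply]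
      rfl
    rw [hA, hB, ← h1X, ← cfc_comp' Real.sqrt (fun t : ℝ => 1 - t) X]
  -- the remainder Y
  set Y : Matrix (Fin n) (Fin n) ℂ := S - 1 + (2⁻¹ : ℂ) • X with hYdef
  have hYconj : Y = U * Matrix.diagonal
      (fun i => ((Real.sqrt (1 - μ i) - 1 + μ i / 2 : ℝ) : ℂ)) * star U := by
    have h1 : (1 : Matrix (Fin n) (Fin n) ℂ)
        = U * Matrix.diagonal (fun _ => (1:ℂ)) * star U := by
      rw [Matrix.diagonal_one, mul_one, hUU']
    have h2 : (2⁻¹ : ℂ) • X = U * Matrix.diagonal (fun i => (2⁻¹ : ℂ) * (μ i : ℂ)) * star U := by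
      rw [hXspec, ← Matrix.smul_mul, ← Matrix.mul_smul]
      congr 2
      ext i j
      by_cases hij : i = j
      · subst hij
        simp [Matrix.diagonal_apply_eq, Pi.smul_apply]
      · simp [Matrix.diagonal_apply_ne _ hij]
    have hdiag : Matrix.diagonal (fun i => ((Real.sqrt (1 - μ i) : ℝ) : ℂ))
        - Matrix.diagonal (fun _ : Fin n => (1:ℂ))
        + Matrix.diagonal (fun i => (2⁻¹ : ℂ) * (μ i : ℂ))
        = Matrix.diagonal (fun i => ((Real.sqrt (1 - μ i) - 1 + μ i / 2 : ℝ) : ℂ)) := by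
      ext i j
      by_cases hij : i = j
      · subst hij
        simp only [Matrix.sub_apply, Matrix.add_apply, Matrix.diagonal_apply_eq]
        push_cast
        ring
      · simp [Matrix.sub_apply, Matrix.add_apply, Matrix.diagonal_apply_ne _ hij,
          Matrix.one_apply_ne hij]
    rw [hYdef, h2]
    conv_lhs => rw [h1]
    rw [hSdef, ← Matrix.sub_mul, ← Matrix.add_mul, ← Matrix.mul_sub, ← Matrix.mul_add, hdiag]
  have hM0 : (0:ℝ) ≤ ‖X‖ := norm_nonneg _
  have hM1 : ‖X‖ ≤ 1 := by
    rw [hXspec]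
    exact norm_conj_le e.eigenvectorUnitary _ 1 zero_le_one
      (fun i => by
        rw [Complex.norm_real, Real.norm_eq_abs, abs_of_nonneg (hμ0 i)]
        exact hμ1 i)
  have hYnorm : ‖Y‖ ≤ ‖X‖^2 / 2 := by
    rw [hYconj]
    apply norm_conj_le e.eigenvectorUnitary _ (‖X‖^2/2) (by positivity)
    intro i
    rw [Complex.norm_real, Real.norm_eq_abs]
    refine (sqrt_remainder_bound (hμ0 i) (hμ1 i)).trans ?_
    have : μ i ^ 2 ≤ ‖X‖ ^ 2 := by
      have := hμnorm i
      nlinarith [abs_nonneg (μ i), abs_of_nonneg (hμ0 i)]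
    linarith
  -- algebraic expansion
  have hSid : S = 1 - (2⁻¹ : ℂ) • X + Y := by rw [hYdef]; abel
  have expand : S * h * S - h + (2⁻¹:ℂ) • (h * X + X * h)
      = h * Y + Y * h + (4⁻¹:ℂ) • (X * h * X) - (2⁻¹:ℂ) • (X * h * Y + Y * h * X)
        + Y * h * Y := by
    conv_lhs => rw [hSid]
    simp only [sub_mul, mul_sub, add_mul, mul_add, smul_mul_assoc, mul_smul_comm, smul_smul,
      smul_add, smul_sub, one_mul, mul_one]
    module
  rw [hSeq, expand]
  -- norm estimates
  set H := ‖h‖ with hH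
  set M := ‖X‖ with hM
  set yv := ‖Y‖ with hyv
  have hH0 : (0:ℝ) ≤ H := norm_nonneg _
  have hy0 : (0:ℝ) ≤ yv := norm_nonneg _
  have b1 : ‖h * Y‖ ≤ H * yv := Matrix.l2_opNorm_mul _ _
  have b2 : ‖Y * h‖ ≤ yv * H := Matrix.l2_opNorm_mul _ _
  have b3 : ‖X * h * X‖ ≤ M * H * M := norm_triple_mul_le _ _ _
  have b4 : ‖X * h * Y‖ ≤ M * H * yv := norm_triple_mul_le _ _ _
  have b5 : ‖Y * h * X‖ ≤ yv * H * M := norm_triple_mul_le _ _ _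
  have b6 : ‖Y * h * Y‖ ≤ yv * H * yv := norm_triple_mul_le _ _ _
  have n4 : ‖(4⁻¹:ℂ) • (X * h * X)‖ = 4⁻¹ * ‖X * h * X‖ := by
    rw [norm_smul]; norm_num
  have n2 : ‖(2⁻¹:ℂ) • (X * h * Y + Y * h * X)‖ = 2⁻¹ * ‖X * h * Y + Y * h * X‖ := by
    rw [norm_smul]; norm_num
  have total : ‖h * Y + Y * h + (4⁻¹:ℂ) • (X * h * X) - (2⁻¹:ℂ) • (X * h * Y + Y * h * X)
      + Y * h * Y‖ ≤ (H * yv + yv * H + 4⁻¹ * (M * H * M))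
        + 2⁻¹ * (M * H * yv + yv * H * M) + yv * H * yv := by
    refine (norm_add_le _ _).trans ?_
    refine add_le_add ?_ b6
    refine (norm_sub_le _ _).trans ?_
    refine add_le_add ?_ ?_
    · refine (norm_add_le _ _).trans ?_
      refine add_le_add ((norm_add_le _ _).trans (add_le_add b1 b2)) ?_
      rw [n4]
      exact mul_le_mul_of_nonneg_left b3 (by norm_num)
    · rw [n2]
      refine mul_le_mul_of_nonneg_left ?_ (by norm_num)
      exact (norm_add_le _ _).trans (add_le_add b4 b5)
  refine total.trans ?_
  nlinarith [mul_nonneg hH0 (sub_nonneg.mpr hYnorm), mul_nonneg hM0 (mul_nonneg hH0 hy0),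
    mul_nonneg (mul_nonneg hH0 hM0) (sub_nonneg.mpr hYnorm),
    mul_nonneg (mul_nonneg hH0 hy0) (sub_nonneg.mpr hYnorm),
    mul_nonneg (mul_nonneg hH0 hM0) (mul_nonneg hM0 (sub_nonneg.mpr hM1)),
    mul_nonneg (mul_nonneg hH0 hM0) (sub_nonneg.mpr hM1),
    mul_nonneg hH0 hy0, sq_nonneg M, mul_nonneg hH0 hM0]
end

section
/- Let P and Q be orthogonal projections on a finite-dimensional Hilbert space, and let c := sup{ |⟨v,u⟩| / (‖v‖‖u‖) : 0 ≠ v ∈ ran P ∩ (ran P ∩ ran Q)^⊥, 0 ≠ u ∈ ran Q ∩ (ran P ∩ ran Q)^⊥ } < 1 (with c := 0 if either space is trivial). Then for every n ≥ 1, ‖(PQ)^n − P∧Q‖ ≤ c^n, where P∧Q is the orthogonal projection onto ran P ∩ ran Q. -/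
open Matrix
open scoped ComplexOrder Matrix.Norms.L2Operator

/-- If `M` is hermitian and fixes `w`, then `star w ⬝ᵥ (M *ᵥ z) = star w ⬝ᵥ z`. -/
lemma stmt17_aux_dot {n : ℕ} (M : Matrix (Fin n) (Fin n) ℂ) (hM : Mᴴ = M)
    (w z : Fin n → ℂ) (hw : M *ᵥ w = w) :
    star w ⬝ᵥ (M *ᵥ z) = star w ⬝ᵥ z := by
  rw [Matrix.dotProduct_mulVec]
  congr 1
  calc star w ᵥ* M = star w ᵥ* Mᴴ := by rw [hM]
    _ = star (M *ᵥ w) := (Matrix.star_mulVec M w).symm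
    _ = star w := by rw [hw]

/-- For vectors, the real part of `star w ⬝ᵥ w` is the square of the Euclidean norm. -/
lemma stmt17_aux_norm {n : ℕ} (w : Fin n → ℂ) :
    (star w ⬝ᵥ w).re = ‖(WithLp.equiv 2 (Fin n → ℂ)).symm w‖ ^ 2 := by
  have h2 : (inner ℂ ((WithLp.equiv 2 (Fin n → ℂ)).symm w)
      ((WithLp.equiv 2 (Fin n → ℂ)).symm w) : ℂ) = star w ⬝ᵥ w :=
    (EuclideanSpace.inner_toLp_toLp w w).trans (dotProduct_comm _ _)
  have h := inner_self_eq_norm_sq (𝕜 := ℂ) ((WithLp.equiv 2 (Fin n → ℂ)).symm w)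
  rw [h2] at h
  simpa [RCLike.re_to_complex] using h

/-- Quantitative alternating projection convergence: if `P, Q` are orthogonal
projections, `R` is the orthogonal projection onto `ran P ∩ ran Q`, and the
Friedrichs-angle cosine between `ran P` and `ran Q` modulo their intersection is at
most `c < 1`, then `‖(PQ)^m − R‖ ≤ c^m` for all `m ≥ 1`. -/
theorem stmt17 {n : ℕ} (c : ℝ) (hc0 : 0 ≤ c) (hc1 : c < 1)
    (P Q R : Matrix (Fin n) (Fin n) ℂ)
    (hP : P.IsHermitian) (hPp : P * P = P)
    (hQ : Q.IsHermitian) (hQp : Q * Q = Q)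
    (hR : R.IsHermitian) (hRp : R * R = R)
    (hRrange : ∀ v : Fin n → ℂ, (P.mulVec v = v ∧ Q.mulVec v = v) ↔ R.mulVec v = v)
    (hangle : ∀ v u : Fin n → ℂ, P.mulVec v = v → R.mulVec v = 0 →
        Q.mulVec u = u → R.mulVec u = 0 →
        ‖star v ⬝ᵥ u‖ ≤ c * Real.sqrt (star v ⬝ᵥ v).re * Real.sqrt (star u ⬝ᵥ u).re) :
    ∀ m : ℕ, 1 ≤ m → ‖(P * Q) ^ m - R‖ ≤ c ^ m := by
  classical
  have ext_mulVec : ∀ (A B : Matrix (Fin n) (Fin n) ℂ),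
      (∀ v, A *ᵥ v = B *ᵥ v) → A = B := fun A B h =>
    Matrix.toLin'.injective (LinearMap.ext fun v => by
      simpa [Matrix.toLin'_apply] using h v)
  -- basic algebraic identities
  have hPR : P * R = R := by
    apply ext_mulVec; intro v
    rw [← Matrix.mulVec_mulVec]
    exact ((hRrange (R *ᵥ v)).mpr (by rw [Matrix.mulVec_mulVec, hRp])).1
  have hQR : Q * R = R := by
    apply ext_mulVec; intro v
    rw [← Matrix.mulVec_mulVec]
    exact ((hRrange (R *ᵥ v)).mpr (by rw [Matrix.mulVec_mulVec, hRp])).2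
  have hRP : R * P = R := by
    have := congrArg Matrix.conjTranspose hPR
    rwa [Matrix.conjTranspose_mul, hP.eq, hR.eq] at this
  have hRQ : R * Q = R := by
    have := congrArg Matrix.conjTranspose hQR
    rwa [Matrix.conjTranspose_mul, hQ.eq, hR.eq] at this
  set P' : Matrix (Fin n) (Fin n) ℂ := P - R with hP'def
  set Q' : Matrix (Fin n) (Fin n) ℂ := Q - R with hQ'def
  have hP'herm : P'ᴴ = P' := by
    simp [hP'def, Matrix.conjTranspose_sub, hP.eq, hR.eq]
  have hQ'herm : Q'ᴴ = Q' := by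
    simp [hQ'def, Matrix.conjTranspose_sub, hQ.eq, hR.eq]
  have hP'idem : P' * P' = P' := by
    simp only [hP'def, Matrix.sub_mul, Matrix.mul_sub, hPp, hPR, hRP, hRp]
    abel
  have hQ'idem : Q' * Q' = Q' := by
    simp only [hQ'def, Matrix.sub_mul, Matrix.mul_sub, hQp, hQR, hRQ, hRp]
    abel
  have hA : P' * Q' = P * Q - R := by
    simp only [hP'def, hQ'def, Matrix.sub_mul, Matrix.mul_sub, hPR, hRQ, hRp]
    abel
  have hPP' : P * P' = P' := by
    simp only [hP'def, Matrix.mul_sub, hPp, hPR]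
  have hRP' : R * P' = 0 := by
    simp only [hP'def, Matrix.mul_sub, hRP, hRp, sub_self]
  have hQQ' : Q * Q' = Q' := by
    simp only [hQ'def, Matrix.mul_sub, hQp, hQR]
  have hRQ' : R * Q' = 0 := by
    simp only [hQ'def, Matrix.mul_sub, hRQ, hRp, sub_self]
  -- operator norm of P' * Q' is at most c
  have hnorm : ‖P' * Q'‖ ≤ c := by
    rw [Matrix.cstar_norm_def]
    refine ContinuousLinearMap.opNorm_le_bound _ hc0 fun x => ?_
    set x' : Fin n → ℂ := WithLp.equiv 2 (Fin n → ℂ) x with hx'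
    set u : Fin n → ℂ := Q' *ᵥ x' with hu
    set v : Fin n → ℂ := P' *ᵥ u with hv
    have hQu : Q *ᵥ u = u := by
      rw [hu, Matrix.mulVec_mulVec, hQQ']
    have hRu : R *ᵥ u = 0 := by
      rw [hu, Matrix.mulVec_mulVec, hRQ', Matrix.zero_mulVec]
    have hPv : P *ᵥ v = v := by
      rw [hv, Matrix.mulVec_mulVec, hPP']
    have hRv : R *ᵥ v = 0 := by
      rw [hv, Matrix.mulVec_mulVec, hRP', Matrix.zero_mulVec]
    have hP'v : P' *ᵥ v = v := by
      rw [hv, Matrix.mulVec_mulVec, hP'idem]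
    have hQ'u : Q' *ᵥ u = u := by
      rw [hu, Matrix.mulVec_mulVec, hQ'idem]
    set U : EuclideanSpace ℂ (Fin n) := (WithLp.equiv 2 (Fin n → ℂ)).symm u with hU
    set V : EuclideanSpace ℂ (Fin n) := (WithLp.equiv 2 (Fin n → ℂ)).symm v with hV
    have hdotu : (star u ⬝ᵥ u : ℂ).re = ‖U‖ ^ 2 := stmt17_aux_norm u
    have hdotv : (star v ⬝ᵥ v : ℂ).re = ‖V‖ ^ 2 := stmt17_aux_norm v
    have hsqv : Real.sqrt (star v ⬝ᵥ v).re = ‖V‖ := by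
      rw [hdotv]; exact Real.sqrt_sq (norm_nonneg V)
    have hsqu : Real.sqrt (star u ⬝ᵥ u).re = ‖U‖ := by
      rw [hdotu]; exact Real.sqrt_sq (norm_nonneg U)
    have hvv_vu : (star v ⬝ᵥ v : ℂ) = star v ⬝ᵥ u :=
      stmt17_aux_dot P' hP'herm v u hP'v
    have hVle : ‖V‖ ≤ c * ‖U‖ := by
      have h1 : ‖V‖ ^ 2 ≤ c * ‖V‖ * ‖U‖ := by
        have hh := hangle v u hPv hRv hQu hRu
        rw [hsqv, hsqu] at hh
        calc ‖V‖ ^ 2 = (star v ⬝ᵥ v : ℂ).re := hdotv.symm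
          _ ≤ ‖(star v ⬝ᵥ u : ℂ)‖ := by
              rw [← hvv_vu]; exact Complex.re_le_norm _
          _ ≤ c * ‖V‖ * ‖U‖ := hh
      rcases eq_or_lt_of_le (norm_nonneg V) with h0 | h0
      · rw [← h0]; positivity
      · exact le_of_mul_le_mul_right (by
          calc ‖V‖ * ‖V‖ = ‖V‖ ^ 2 := (sq ‖V‖).symm
            _ ≤ c * ‖V‖ * ‖U‖ := h1
            _ = c * ‖U‖ * ‖V‖ := by ring) h0
    have hUle : ‖U‖ ≤ ‖x‖ := by
      have huu_ux : (star u ⬝ᵥ u : ℂ) = star u ⬝ᵥ x' :=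
        stmt17_aux_dot Q' hQ'herm u x' hQ'u
      have hinner : (inner ℂ U x : ℂ) = star u ⬝ᵥ x' :=
        (EuclideanSpace.inner_toLp_toLp u x').trans (dotProduct_comm _ _)
      have h2 : ‖U‖ ^ 2 ≤ ‖U‖ * ‖x‖ := by
        calc ‖U‖ ^ 2 = (star u ⬝ᵥ u : ℂ).re := hdotu.symm
          _ ≤ ‖(inner ℂ U x : ℂ)‖ := by
              rw [hinner, ← huu_ux]; exact Complex.re_le_norm _
          _ ≤ ‖U‖ * ‖x‖ := norm_inner_le_norm U x
      rcases eq_or_lt_of_le (norm_nonneg U) with h0 | h0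
      · rw [← h0]; exact norm_nonneg x
      · exact le_of_mul_le_mul_left (by rw [← sq]; exact h2) h0
    have happ : (Matrix.toEuclideanCLM (n := Fin n) (𝕜 := ℂ) (P' * Q')) x = V := by
      apply (WithLp.equiv 2 (Fin n → ℂ)).injective
      change (P' * Q') *ᵥ x' = v
      rw [hv, hu, Matrix.mulVec_mulVec]
    rw [happ]
    calc ‖V‖ ≤ c * ‖U‖ := hVle
      _ ≤ c * ‖x‖ := mul_le_mul_of_nonneg_left hUle hc0
  -- (P*Q)^m - R = (P'*Q')^m for m ≥ 1
  have hPQR : (P * Q) * R = R := by rw [mul_assoc, hQR, hPR]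
  have hPQkR : ∀ k : ℕ, 1 ≤ k → (P * Q) ^ k * R = R := by
    intro k hk
    induction k, hk using Nat.le_induction with
    | base => simpa using hPQR
    | succ j hj ihj => rw [pow_succ, mul_assoc, hPQR, ihj]
  have hRPQ : R * (P * Q) = R := by rw [← mul_assoc, hRP, hRQ]
  have hpow : ∀ m : ℕ, 1 ≤ m → (P' * Q') ^ m = (P * Q) ^ m - R := by
    intro m hm
    induction m, hm using Nat.le_induction with
    | base => simp [hA]
    | succ k hk ih =>
      rw [pow_succ, ih, hA, Matrix.sub_mul, Matrix.mul_sub, Matrix.mul_sub,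
        hPQkR k hk, hRPQ, hRp, ← pow_succ]
      abel
  intro m hm
  rw [← hpow m hm]
  calc ‖(P' * Q') ^ m‖ ≤ ‖P' * Q'‖ ^ m := norm_pow_le' _ (by omega)
    _ ≤ c ^ m := pow_le_pow_left₀ (norm_nonneg _) hnorm m
end
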